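/- arXiv:1605.05056 — 4 statements merged into one kernel-verified Lean document; each statement's English description precedes it below -/
import Mathlib

section
/- The graph F1 satisfies γ_e(F1) < γ(F1). -/
open SimpleGraph

/-- `D` is a dominating set of `G`. -/
def IsDomSet {V : Type*} (G : SimpleGraph V) (D : Finset V) : Prop :=
  ∀ v : V, v ∉ D → ∃ u ∈ D, G.Adj u v

/-- The domination number of `G`. -/
noncomputable def domNum {V : Type*} (G : SimpleGraph V) [Fintype V] : ℕ :=
  sInf {n | ∃ D : Finset V, IsDomSet G D ∧ D.card = n}

open Classical in
/-- `D` contains exactly one endvertex of a path between `u` and `v`. -/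
def endCond {V : Type*} (D : Finset V) (u v : V) : Prop :=
  if u = v then u ∈ D else ((u ∈ D ∧ v ∉ D) ∨ (u ∉ D ∧ v ∈ D))

/-- `dist_{(G,D)}(u,v)`: the minimum length of a path in `G` between `u` and `v` such
that `D` contains exactly one endvertex and no internal vertex of the path;
`⊤` if no such path exists. -/
noncomputable def eDist {V : Type*} (G : SimpleGraph V) (D : Finset V) (u v : V) : ℕ∞ :=
  ⨅ (p : {p : G.Walk u v // p.IsPath ∧ endCond D u v ∧
      ∀ w ∈ p.support, w ≠ u → w ≠ v → w ∉ D}), (p.1.length : ℕ∞)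

/-- `(1/2)^(d-1)` for `d : ℕ∞`, with `(1/2)^∞ = 0`. -/
noncomputable def halfPow (d : ℕ∞) : ℝ :=
  if d = ⊤ then 0 else 2 * (1 / 2 : ℝ) ^ d.toNat

/-- The weight `w_{(G,D)}(u)`. -/
noncomputable def expWeight {V : Type*} (G : SimpleGraph V) (D : Finset V) (u : V) : ℝ :=
  ∑ v ∈ D, halfPow (eDist G D u v)

/-- `D` is an exponential dominating set of `G`. -/
def IsExpDomSet {V : Type*} (G : SimpleGraph V) (D : Finset V) : Prop :=
  ∀ u : V, 1 ≤ expWeight G D u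

/-- The exponential domination number of `G`. -/
noncomputable def expDomNum {V : Type*} (G : SimpleGraph V) [Fintype V] : ℕ :=
  sInf {n | ∃ D : Finset V, IsExpDomSet G D ∧ D.card = n}

/-- `G` is `H`-free: `G` has no induced subgraph isomorphic to `H`. -/
def Free {V W : Type*} (G : SimpleGraph V) (H : SimpleGraph W) : Prop :=
  ¬ Nonempty (H ↪g G)

/-- The graph on `Fin n` with the given edge list. -/
def graphOfList (n : ℕ) (l : List (Fin n × Fin n)) : SimpleGraph (Fin n) :=
  SimpleGraph.fromRel (fun a b => (a, b) ∈ l)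

/-- The bull `B`. -/
def bull : SimpleGraph (Fin 5) := graphOfList 5 [(0,1),(1,2),(0,2),(0,3),(1,4)]
/-- The diamond `D` (`K₄` minus an edge). -/
def diamond : SimpleGraph (Fin 4) := graphOfList 4 [(0,1),(0,2),(0,3),(1,2),(1,3)]
/-- The complete graph `K₄`. -/
def K4 : SimpleGraph (Fin 4) := ⊤
/-- The complete bipartite graph `K_{2,3}` with parts `{0,1}` and `{2,3,4}`. -/
def K23 : SimpleGraph (Fin 5) := graphOfList 5 [(0,2),(0,3),(0,4),(1,2),(1,3),(1,4)]
/-- The 2×3 grid `P₂ □ P₃`. -/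
def P2P3 : SimpleGraph (Fin 2 × Fin 3) := (pathGraph 2) □ (pathGraph 3)
/-- The path on 7 vertices. -/
def P7 : SimpleGraph (Fin 7) := pathGraph 7
/-- The cycle on 7 vertices. -/
def C7 : SimpleGraph (Fin 7) := cycleGraph 7
/-- `F₁`: the path `0-1-2` with pendant vertices `3,4,5` attached to `0,1,2`. -/
def F1 : SimpleGraph (Fin 6) := graphOfList 6 [(0,1),(1,2),(0,3),(1,4),(2,5)]
/-- `F₂`: a 4-cycle with a pendant path on 3 new vertices. -/
def F2 : SimpleGraph (Fin 7) := graphOfList 7 [(0,1),(1,2),(2,3),(3,0),(0,4),(4,5),(5,6)]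
/-- `F₃`: a 4-cycle `0-1-2-3` and a 5-cycle `1-2-4-5-6` sharing exactly the edge `1-2`. -/
def F3 : SimpleGraph (Fin 7) := graphOfList 7 [(0,1),(1,2),(2,3),(3,0),(2,4),(4,5),(5,6),(6,1)]
/-- `F₄`: two 4-cycles sharing exactly the vertex `0`. -/
def F4 : SimpleGraph (Fin 7) := graphOfList 7 [(0,1),(1,2),(2,3),(3,0),(0,4),(4,5),(5,6),(6,0)]
/-- `F₅`: vertices `u=0, v₁=1, v₂=2, w=3, a=4, b=5, z=6`. -/
def F5 : SimpleGraph (Fin 7) := graphOfList 7 [(0,1),(0,2),(1,3),(2,3),(1,4),(4,5),(5,2),(3,6)]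

section Aux

lemma halfPow_nonneg (d : ℕ∞) : 0 ≤ halfPow d := by
  unfold halfPow
  split_ifs
  · exact le_refl 0
  · positivity

lemma halfPow_anti {d e : ℕ∞} (h : d ≤ e) : halfPow e ≤ halfPow d := by
  rcases eq_or_ne e ⊤ with he | he
  · subst he
    rw [show halfPow ⊤ = 0 from if_pos rfl]
    exact halfPow_nonneg d
  · have hd : d ≠ ⊤ := fun h' => he (top_le_iff.mp (h' ▸ h))
    unfold halfPow
    rw [if_neg he, if_neg hd]
    have hn : d.toNat ≤ e.toNat := ENat.toNat_le_toNat h he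
    have := pow_le_pow_of_le_one (by norm_num : (0:ℝ) ≤ 1/2) (by norm_num) hn
    nlinarith

lemma halfPow_natCast (n : ℕ) : halfPow (n : ℕ∞) = 2 * (1/2:ℝ)^n := by
  unfold halfPow
  rw [if_neg (by exact_mod_cast ENat.coe_ne_top n)]
  simp

lemma eDist_le_of {V : Type*} (G : SimpleGraph V) (D : Finset V) {u v : V} (p : G.Walk u v)
    (h1 : p.IsPath) (h2 : endCond D u v)
    (h3 : ∀ w ∈ p.support, w ≠ u → w ≠ v → w ∉ D) :
    eDist G D u v ≤ (p.length : ℕ∞) :=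
  iInf_le (fun q : {q : G.Walk u v // q.IsPath ∧ endCond D u v ∧
      ∀ w ∈ q.support, w ≠ u → w ≠ v → w ∉ D} => (q.1.length : ℕ∞)) ⟨p, h1, h2, h3⟩

lemma endCond_of_ne {V : Type*} (D : Finset V) {u v : V} (h : u ≠ v)
    (h2 : (u ∈ D ∧ v ∉ D) ∨ (u ∉ D ∧ v ∈ D)) : endCond D u v := by
  unfold endCond
  rw [if_neg h]
  exact h2

lemma endCond_self {V : Type*} (D : Finset V) {u : V} (h : u ∈ D) : endCond D u u := by
  unfold endCond
  rw [if_pos rfl]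
  exact h

lemma F1_adj_01 : F1.Adj 0 1 := by simp only [F1, graphOfList, fromRel_adj]; decide
lemma F1_adj_10 : F1.Adj 1 0 := F1_adj_01.symm
lemma F1_adj_12 : F1.Adj 1 2 := by simp only [F1, graphOfList, fromRel_adj]; decide
lemma F1_adj_30 : F1.Adj 3 0 := by simp only [F1, graphOfList, fromRel_adj]; decide
lemma F1_adj_41 : F1.Adj 4 1 := by simp only [F1, graphOfList, fromRel_adj]; decide
lemma F1_adj_52 : F1.Adj 5 2 := by simp only [F1, graphOfList, fromRel_adj]; decide

/-- helper: a lower bound on a halfPow term via an explicit walk. -/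
lemma halfPow_ge {u v : Fin 6} (p : F1.Walk u v)
    (h1 : p.IsPath) (h2 : endCond ({0,2} : Finset (Fin 6)) u v)
    (h3 : ∀ w ∈ p.support, w ≠ u → w ≠ v → w ∉ ({0,2} : Finset (Fin 6))) :
    2 * (1/2:ℝ)^p.length ≤ halfPow (eDist F1 ({0,2} : Finset (Fin 6)) u v) := by
  have := halfPow_anti (eDist_le_of F1 _ p h1 h2 h3)
  rwa [halfPow_natCast] at this

lemma F1_expdom : IsExpDomSet F1 ({0,2} : Finset (Fin 6)) := by
  intro u
  rw [expWeight, Finset.sum_pair (by decide : (0:Fin 6) ≠ 2)]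
  fin_cases u
  · -- u = 0 : nil walk at 0
    show (1:ℝ) ≤ halfPow (eDist F1 {0,2} 0 0) + halfPow (eDist F1 {0,2} 0 2)
    have nn2 := halfPow_nonneg (eDist F1 ({0,2} : Finset (Fin 6)) 0 2)
    have h := halfPow_ge (Walk.nil : F1.Walk 0 0) (by simp)
      (endCond_self _ (by decide))
      (by intro w hw hwu hwv; simp [Walk.support_nil] at hw; exact absurd hw hwu)
    simp only [Walk.length_nil, pow_zero, mul_one] at h
    linarith
  · -- u = 1 : walk 1-0
    show (1:ℝ) ≤ halfPow (eDist F1 {0,2} 1 0) + halfPow (eDist F1 {0,2} 1 2)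
    have nn2 := halfPow_nonneg (eDist F1 ({0,2} : Finset (Fin 6)) 1 2)
    have h := halfPow_ge (Walk.cons F1_adj_10 Walk.nil)
      (by simp [Walk.isPath_def, Walk.support_cons, Walk.support_nil])
      (endCond_of_ne _ (by decide) (Or.inr (by decide)))
      (by
        intro w hw hwu hwv
        simp [Walk.support_cons, Walk.support_nil] at hw
        rcases hw with rfl | rfl
        · exact absurd rfl hwu
        · exact absurd rfl hwv)
    simp only [Walk.length_cons, Walk.length_nil, pow_one] at h
    linarith
  · -- u = 2 : nil walk at 2
    show (1:ℝ) ≤ halfPow (eDist F1 {0,2} 2 0) + halfPow (eDist F1 {0,2} 2 2)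
    have nn0 := halfPow_nonneg (eDist F1 ({0,2} : Finset (Fin 6)) 2 0)
    have h := halfPow_ge (Walk.nil : F1.Walk 2 2) (by simp)
      (endCond_self _ (by decide))
      (by intro w hw hwu hwv; simp [Walk.support_nil] at hw; exact absurd hw hwu)
    simp only [Walk.length_nil, pow_zero, mul_one] at h
    linarith
  · -- u = 3 : walk 3-0
    show (1:ℝ) ≤ halfPow (eDist F1 {0,2} 3 0) + halfPow (eDist F1 {0,2} 3 2)
    have nn2 := halfPow_nonneg (eDist F1 ({0,2} : Finset (Fin 6)) 3 2)
    have h := halfPow_ge (Walk.cons F1_adj_30 Walk.nil)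
      (by simp [Walk.isPath_def, Walk.support_cons, Walk.support_nil])
      (endCond_of_ne _ (by decide) (Or.inr (by decide)))
      (by
        intro w hw hwu hwv
        simp [Walk.support_cons, Walk.support_nil] at hw
        rcases hw with rfl | rfl
        · exact absurd rfl hwu
        · exact absurd rfl hwv)
    simp only [Walk.length_cons, Walk.length_nil, pow_one] at h
    linarith
  · -- u = 4 : walks 4-1-0 and 4-1-2
    show (1:ℝ) ≤ halfPow (eDist F1 {0,2} 4 0) + halfPow (eDist F1 {0,2} 4 2)
    have h1 := halfPow_ge (Walk.cons F1_adj_41 (Walk.cons F1_adj_10 Walk.nil))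
      (by simp [Walk.isPath_def, Walk.support_cons, Walk.support_nil])
      (endCond_of_ne _ (by decide) (Or.inr (by decide)))
      (by
        intro w hw hwu hwv
        simp [Walk.support_cons, Walk.support_nil] at hw
        rcases hw with rfl | rfl | rfl
        · exact absurd rfl hwu
        · decide
        · exact absurd rfl hwv)
    have h2 := halfPow_ge (Walk.cons F1_adj_41 (Walk.cons F1_adj_12 Walk.nil))
      (by simp [Walk.isPath_def, Walk.support_cons, Walk.support_nil])
      (endCond_of_ne _ (by decide) (Or.inr (by decide)))
      (by
        intro w hw hwu hwv
        simp [Walk.support_cons, Walk.support_nil] at hw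
        rcases hw with rfl | rfl | rfl
        · exact absurd rfl hwu
        · decide
        · exact absurd rfl hwv)
    simp only [Walk.length_cons, Walk.length_nil] at h1 h2
    norm_num at h1 h2
    linarith
  · -- u = 5 : walk 5-2
    show (1:ℝ) ≤ halfPow (eDist F1 {0,2} 5 0) + halfPow (eDist F1 {0,2} 5 2)
    have nn0 := halfPow_nonneg (eDist F1 ({0,2} : Finset (Fin 6)) 5 0)
    have h := halfPow_ge (Walk.cons F1_adj_52 Walk.nil)
      (by simp [Walk.isPath_def, Walk.support_cons, Walk.support_nil])
      (endCond_of_ne _ (by decide) (Or.inr (by decide)))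
      (by
        intro w hw hwu hwv
        simp [Walk.support_cons, Walk.support_nil] at hw
        rcases hw with rfl | rfl
        · exact absurd rfl hwu
        · exact absurd rfl hwv)
    simp only [Walk.length_cons, Walk.length_nil, pow_one] at h
    linarith

lemma F1_domNum_ge : 3 ≤ domNum F1 := by
  apply le_csInf
  · exact ⟨6, Finset.univ, fun v hv => absurd (Finset.mem_univ v) hv, by decide⟩
  rintro n ⟨D, hdom, rfl⟩
  have key : ∀ (a b : Fin 6), (∀ u, F1.Adj u b → u = a) → ∃ x ∈ D, x = a ∨ x = b := by
    intro a b hb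
    by_cases h : b ∈ D
    · exact ⟨b, h, Or.inr rfl⟩
    · obtain ⟨u, hu, hadj⟩ := hdom b h
      exact ⟨u, hu, Or.inl (hb u hadj)⟩
  obtain ⟨x, hx, hx'⟩ := key 0 3 (by simp only [F1, graphOfList, fromRel_adj]; decide)
  obtain ⟨y, hy, hy'⟩ := key 1 4 (by simp only [F1, graphOfList, fromRel_adj]; decide)
  obtain ⟨z, hz, hz'⟩ := key 2 5 (by simp only [F1, graphOfList, fromRel_adj]; decide)
  have hsub : ({x, y, z} : Finset (Fin 6)) ⊆ D := by
    intro w hw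
    simp only [Finset.mem_insert, Finset.mem_singleton] at hw
    rcases hw with rfl | rfl | rfl <;> assumption
  rcases hx' with rfl | rfl <;> rcases hy' with rfl | rfl <;> rcases hz' with rfl | rfl <;>
    exact le_trans (by decide) (Finset.card_le_card hsub)

end Aux

/-- `γₑ(F₁) < γ(F₁)`. -/
theorem expDomNum_F1_lt_domNum_F1 : expDomNum F1 < domNum F1 := by
  have h2 : expDomNum F1 ≤ 2 :=
    Nat.sInf_le ⟨({0,2} : Finset (Fin 6)), F1_expdom, by decide⟩
  have h3 := F1_domNum_ge
  omega
end

section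
/- The graph F3 satisfies γ_e(F3) < γ(F3). -/
open SimpleGraph

set_option maxRecDepth 4000

instance F3.decAdj : DecidableRel F3.Adj := fun a b =>
  decidable_of_iff' _ (SimpleGraph.fromRel_adj _ a b)

instance (D : Finset (Fin 7)) : Decidable (IsDomSet F3 D) :=
  decidable_of_iff (∀ v : Fin 7, v ∉ D → ∃ u ∈ D, F3.Adj u v) Iff.rfl

lemma halfPow_ge_s10 (d : ℕ∞) (n : ℕ) (h : d ≤ (n : ℕ∞)) :
    2 * (1/2 : ℝ) ^ n ≤ halfPow d := by
  have hd : d ≠ ⊤ := fun h' => by simp [h'] at h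
  rw [halfPow, if_neg hd]
  have hdn : d.toNat ≤ n := by
    lift d to ℕ using hd
    exact_mod_cast h
  have := pow_le_pow_of_le_one (by norm_num : (0:ℝ) ≤ 1/2) (by norm_num : (1/2:ℝ) ≤ 1) hdn
  linarith

lemma eDist_le {V : Type*} (G : SimpleGraph V) (D : Finset V) (u v : V)
    (p : G.Walk u v) (h1 : p.IsPath) (h2 : endCond D u v)
    (h3 : ∀ w ∈ p.support, w ≠ u → w ≠ v → w ∉ D) :
    eDist G D u v ≤ (p.length : ℕ∞) :=
  iInf_le _ (⟨p, h1, h2, h3⟩ : {q : G.Walk u v // q.IsPath ∧ endCond D u v ∧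
      ∀ w ∈ q.support, w ≠ u → w ≠ v → w ∉ D})

def D14 : Finset (Fin 7) := {1, 4}

lemma supp1 {u v : Fin 7} (h : F3.Adj u v) :
    ∀ w ∈ (Walk.cons h (Walk.nil : F3.Walk v v)).support, w ≠ u → w ≠ v → w ∉ D14 := by
  intro w hw hu hv
  simp only [Walk.support_cons, Walk.support_nil, List.mem_cons, List.mem_singleton,
    List.not_mem_nil, or_false] at hw
  rcases hw with rfl | rfl
  · exact absurd rfl hu
  · exact absurd rfl hv

lemma supp2 {u x v : Fin 7} (h1 : F3.Adj u x) (h2 : F3.Adj x v) (hx : x ∉ D14) :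
    ∀ w ∈ (Walk.cons h1 (Walk.cons h2 (Walk.nil : F3.Walk v v))).support,
      w ≠ u → w ≠ v → w ∉ D14 := by
  intro w hw hu hv
  simp only [Walk.support_cons, Walk.support_nil, List.mem_cons, List.mem_singleton,
    List.not_mem_nil, or_false] at hw
  rcases hw with rfl | rfl | rfl
  · exact absurd rfl hu
  · exact hx
  · exact absurd rfl hv

lemma supp0 {u : Fin 7} :
    ∀ w ∈ (Walk.nil : F3.Walk u u).support, w ≠ u → w ≠ u → w ∉ D14 := by
  intro w hw hu _
  simp only [Walk.support_nil, List.mem_singleton] at hw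
  exact absurd hw hu

lemma path2 {u x v : Fin 7} (h1 : F3.Adj u x) (h2 : F3.Adj x v) (huv : u ≠ v) :
    (Walk.cons h1 (Walk.cons h2 (Walk.nil : F3.Walk v v))).IsPath := by
  refine Walk.IsPath.cons (Walk.IsPath.cons Walk.IsPath.nil ?_) ?_
  · simp [Walk.support_nil]
    exact h2.ne
  · simp [Walk.support_cons, Walk.support_nil]
    exact ⟨h1.ne, huv⟩



lemma weight_ge (u : Fin 7) (b1 b4 : ℝ)
    (h1 : b1 ≤ halfPow (eDist F3 D14 u 1)) (h4 : b4 ≤ halfPow (eDist F3 D14 u 4))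
    (hb : 1 ≤ b1 + b4) : 1 ≤ expWeight F3 D14 u := by
  have hsum : expWeight F3 D14 u
      = halfPow (eDist F3 D14 u 1) + halfPow (eDist F3 D14 u 4) :=
    Finset.sum_pair (by decide)
  rw [hsum]; linarith

lemma expdom14 : IsExpDomSet F3 D14 := by
  have a01 : F3.Adj 0 1 := ⟨by decide, by decide⟩
  have a21 : F3.Adj 2 1 := ⟨by decide, by decide⟩
  have a30 : F3.Adj 3 0 := ⟨by decide, by decide⟩
  have a32 : F3.Adj 3 2 := ⟨by decide, by decide⟩
  have a24 : F3.Adj 2 4 := ⟨by decide, by decide⟩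
  have a54 : F3.Adj 5 4 := ⟨by decide, by decide⟩
  have a61 : F3.Adj 6 1 := ⟨by decide, by decide⟩
  intro u
  fin_cases u
  · refine weight_ge 0 1 0 ?_ (halfPow_nonneg _) (by norm_num)
    have h := eDist_le F3 D14 0 1 (Walk.cons a01 (Walk.nil : F3.Walk 1 1))
      (by simp) (by rw [endCond, if_neg (by decide)]; decide) (supp1 a01)
    have := halfPow_ge_s10 _ 1 h
    norm_num at this ⊢; linarith
  · refine weight_ge 1 2 0 ?_ (halfPow_nonneg _) (by norm_num)
    have h := eDist_le F3 D14 1 1 (Walk.nil : F3.Walk 1 1) (by simp)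
      (by rw [endCond, if_pos rfl]; decide) supp0
    have := halfPow_ge_s10 _ 0 h
    norm_num at this ⊢; linarith
  · refine weight_ge 2 1 0 ?_ (halfPow_nonneg _) (by norm_num)
    have h := eDist_le F3 D14 2 1 (Walk.cons a21 (Walk.nil : F3.Walk 1 1))
      (by simp) (by rw [endCond, if_neg (by decide)]; decide) (supp1 a21)
    have := halfPow_ge_s10 _ 1 h
    norm_num at this ⊢; linarith
  · refine weight_ge 3 (1/2) (1/2) ?_ ?_ (by norm_num)
    · have h := eDist_le F3 D14 3 1 (Walk.cons a30 (Walk.cons a01 (Walk.nil : F3.Walk 1 1)))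
        (path2 a30 a01 (by decide)) (by rw [endCond, if_neg (by decide)]; decide)
        (supp2 a30 a01 (by decide))
      have := halfPow_ge_s10 _ 2 h
      norm_num at this ⊢; linarith
    · have h := eDist_le F3 D14 3 4 (Walk.cons a32 (Walk.cons a24 (Walk.nil : F3.Walk 4 4)))
        (path2 a32 a24 (by decide)) (by rw [endCond, if_neg (by decide)]; decide)
        (supp2 a32 a24 (by decide))
      have := halfPow_ge_s10 _ 2 h
      norm_num at this ⊢; linarith
  · refine weight_ge 4 0 2 (halfPow_nonneg _) ?_ (by norm_num)
    have h := eDist_le F3 D14 4 4 (Walk.nil : F3.Walk 4 4) (by simp)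
      (by rw [endCond, if_pos rfl]; decide) supp0
    have := halfPow_ge_s10 _ 0 h
    norm_num at this ⊢; linarith
  · refine weight_ge 5 0 1 (halfPow_nonneg _) ?_ (by norm_num)
    have h := eDist_le F3 D14 5 4 (Walk.cons a54 (Walk.nil : F3.Walk 4 4))
      (by simp) (by rw [endCond, if_neg (by decide)]; decide) (supp1 a54)
    have := halfPow_ge_s10 _ 1 h
    norm_num at this ⊢; linarith
  · refine weight_ge 6 1 0 ?_ (halfPow_nonneg _) (by norm_num)
    have h := eDist_le F3 D14 6 1 (Walk.cons a61 (Walk.nil : F3.Walk 1 1))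
      (by simp) (by rw [endCond, if_neg (by decide)]; decide) (supp1 a61)
    have := halfPow_ge_s10 _ 1 h
    norm_num at this ⊢; linarith


/-- `γₑ(F₃) < γ(F₃)`. -/
theorem expDomNum_F3_lt_domNum_F3 : expDomNum F3 < domNum F3 := by

  have hle : expDomNum F3 ≤ 2 := Nat.sInf_le ⟨D14, expdom14, by decide⟩
  have hge : 3 ≤ domNum F3 := by
    apply le_csInf
    · exact ⟨7, Finset.univ, fun v hv => absurd (Finset.mem_univ v) hv, by decide⟩
    · rintro n ⟨D, hD, rfl⟩
      revert hD; revert D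
      have : ∀ D : Finset (Fin 7), IsDomSet F3 D → 3 ≤ D.card := by decide
      exact this
  omega
end

section
/- Let G be a finite connected simple graph that is {B, D, K4, K_{2,3}, P2□P3, P7, C7, F1, F2, F3, F4, F5}-free and has γ(G) ≥ 3. Then every triangle of G contains at least one vertex whose degree in G is exactly 2. -/
open SimpleGraph

section AuxClaim3
variable {V : Type*} {G : SimpleGraph V}

lemma noDia (hD : _root_.Free G diamond) {a b c d : V} (hab : G.Adj a b) (hac : G.Adj a c)
    (had : G.Adj a d) (hbc : G.Adj b c) (hbd : G.Adj b d) (hcd : ¬ G.Adj c d)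
    (hne : c ≠ d) : False := by
  apply hD
  have h1 : a ≠ b := hab.ne
  have h2 : a ≠ c := hac.ne
  have h3 : a ≠ d := had.ne
  have h4 : b ≠ c := hbc.ne
  have h5 : b ≠ d := hbd.ne
  have s1 := hab.symm; have s2 := hac.symm; have s3 := had.symm
  have s4 := hbc.symm; have s5 := hbd.symm
  have hcd' : ¬ G.Adj d c := fun h => hcd h.symm
  refine ⟨⟨⟨![a,b,c,d], ?_⟩, ?_⟩⟩
  · intro i j hij
    fin_cases i <;> fin_cases j <;> simp_all
  · intro i j
    change G.Adj (![a,b,c,d] i) (![a,b,c,d] j) ↔ _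
    fin_cases i <;> fin_cases j <;> simp_all [diamond, graphOfList, G.irrefl]

lemma noK4' (hK : _root_.Free G K4) {a b c d : V} (hab : G.Adj a b) (hac : G.Adj a c)
    (had : G.Adj a d) (hbc : G.Adj b c) (hbd : G.Adj b d) (hcd : G.Adj c d) : False := by
  apply hK
  have h1 : a ≠ b := hab.ne
  have h2 : a ≠ c := hac.ne
  have h3 : a ≠ d := had.ne
  have h4 : b ≠ c := hbc.ne
  have h5 : b ≠ d := hbd.ne
  have h6 : c ≠ d := hcd.ne
  have s1 := hab.symm; have s2 := hac.symm; have s3 := had.symm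
  have s4 := hbc.symm; have s5 := hbd.symm; have s6 := hcd.symm
  refine ⟨⟨⟨![a,b,c,d], ?_⟩, ?_⟩⟩
  · intro i j hij
    fin_cases i <;> fin_cases j <;> simp_all
  · intro i j
    change G.Adj (![a,b,c,d] i) (![a,b,c,d] j) ↔ _
    fin_cases i <;> fin_cases j <;> simp_all [K4, G.irrefl]

lemma noBull (hB : _root_.Free G bull) {a b c d e : V} (hab : G.Adj a b) (hac : G.Adj a c)
    (hbc : G.Adj b c) (had : G.Adj a d) (hbe : G.Adj b e)
    (ncd : ¬ G.Adj c d) (nce : ¬ G.Adj c e) (nde : ¬ G.Adj d e)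
    (nae : ¬ G.Adj a e) (nbd : ¬ G.Adj b d)
    (hdc : d ≠ c) (hec : e ≠ c) (hde : d ≠ e) : False := by
  apply hB
  have h1 : a ≠ b := hab.ne
  have h2 : a ≠ c := hac.ne
  have h3 : a ≠ d := had.ne
  have h4 : b ≠ c := hbc.ne
  have h5 : b ≠ e := hbe.ne
  have h6 : a ≠ e := fun h => nde (h ▸ had.symm)
  have h7 : b ≠ d := fun h => nde (h ▸ hbe)
  have s1 := hab.symm; have s2 := hac.symm; have s3 := hbc.symm
  have s4 := had.symm; have s5 := hbe.symm
  have m1 : ¬ G.Adj d c := fun h => ncd h.symm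
  have m2 : ¬ G.Adj e c := fun h => nce h.symm
  have m3 : ¬ G.Adj e d := fun h => nde h.symm
  have m4 : ¬ G.Adj e a := fun h => nae h.symm
  have m5 : ¬ G.Adj d b := fun h => nbd h.symm
  refine ⟨⟨⟨![a,b,c,d,e], ?_⟩, ?_⟩⟩
  · intro i j hij
    fin_cases i <;> fin_cases j <;> simp_all
  · intro i j
    change G.Adj (![a,b,c,d,e] i) (![a,b,c,d,e] j) ↔ _
    fin_cases i <;> fin_cases j <;> simp_all [bull, graphOfList, G.irrefl]

/-- No vertex outside a triangle is adjacent to two vertices of the triangle. -/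
lemma noTwo (hD : _root_.Free G diamond) (hK : _root_.Free G K4) {a b c z : V}
    (hab : G.Adj a b) (hac : G.Adj a c) (hbc : G.Adj b c)
    (haz : G.Adj a z) (hbz : G.Adj b z) (hzc : z ≠ c) : False := by
  by_cases h : G.Adj c z
  · exact noK4' hK hab hac haz hbc hbz h
  · exact noDia hD hab hac haz hbc hbz h (fun h' => hzc h'.symm)

/-- Outside neighbors of distinct triangle vertices are adjacent. -/
lemma stepC (hB : _root_.Free G bull) {a b c p q : V}
    (hab : G.Adj a b) (hac : G.Adj a c) (hbc : G.Adj b c)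
    (hap : G.Adj a p) (nbp : ¬ G.Adj b p) (ncp : ¬ G.Adj c p) (hpc : p ≠ c)
    (hbq : G.Adj b q) (naq : ¬ G.Adj a q) (ncq : ¬ G.Adj c q) (hqc : q ≠ c) :
    G.Adj p q := by
  by_contra hn
  have hpq : p ≠ q := fun h => naq (h ▸ hap)
  exact noBull hB hab hac hbc hap hbq ncp ncq hn naq nbp hpc hqc hpq

/-- Each triangle vertex has a unique outside neighbor. -/
lemma stepD (hB : _root_.Free G bull) (hD : _root_.Free G diamond) {a b c p q r v : V}
    (hab : G.Adj a b) (hac : G.Adj a c) (hbc : G.Adj b c)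
    (hap : G.Adj a p) (nbp : ¬ G.Adj b p) (ncp : ¬ G.Adj c p) (hpb : p ≠ b) (hpc : p ≠ c)
    (hbq : G.Adj b q) (naq : ¬ G.Adj a q) (ncq : ¬ G.Adj c q) (hqa : q ≠ a) (hqc : q ≠ c)
    (hcr : G.Adj c r) (nar : ¬ G.Adj a r) (nbr : ¬ G.Adj b r) (hra : r ≠ a) (hrb : r ≠ b)
    (hav : G.Adj a v) (nbv : ¬ G.Adj b v) (ncv : ¬ G.Adj c v) (hvb : v ≠ b) (hvc : v ≠ c)
    (hvp : v ≠ p) : False := by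
  have epq : G.Adj p q := stepC hB hab hac hbc hap nbp ncp hpc hbq naq ncq hqc
  have epr : G.Adj p r := stepC hB hac hab hbc.symm hap ncp nbp hpb hcr nar nbr hrb
  have evq : G.Adj v q := stepC hB hab hac hbc hav nbv ncv hvc hbq naq ncq hqc
  have evr : G.Adj v r := stepC hB hac hab hbc.symm hav ncv nbv hvb hcr nar nbr hrb
  by_cases hpv : G.Adj p v
  · exact noDia hD hpv hap.symm epq hav.symm evq naq hqa.symm
  · have eqr : G.Adj q r :=
      stepC hB hbc hab.symm hac.symm hbq ncq naq hqa hcr nbr nar hra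
    exact noDia hD eqr epq.symm evq.symm epr.symm evr.symm hpv hvp.symm

/-- No vertex outside the prism is adjacent to an outside neighbor. -/
lemma yClosure (hB : _root_.Free G bull) (hD : _root_.Free G diamond) (hK : _root_.Free G K4) {a b c p q r v : V}
    (hab : G.Adj a b) (hac : G.Adj a c) (hbc : G.Adj b c)
    (hap : G.Adj a p) (nbp : ¬ G.Adj b p) (ncp : ¬ G.Adj c p) (hpb : p ≠ b) (hpc : p ≠ c)
    (hbq : G.Adj b q) (naq : ¬ G.Adj a q) (ncq : ¬ G.Adj c q) (hqa : q ≠ a) (hqc : q ≠ c)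
    (hcr : G.Adj c r) (nar : ¬ G.Adj a r) (nbr : ¬ G.Adj b r) (hra : r ≠ a) (hrb : r ≠ b)
    (hpv : G.Adj p v) (nav : ¬ G.Adj a v) (nbv : ¬ G.Adj b v) (ncv : ¬ G.Adj c v)
    (hvq : v ≠ q) (hvr : v ≠ r) : False := by
  have epq : G.Adj p q := stepC hB hab hac hbc hap nbp ncp hpc hbq naq ncq hqc
  have epr : G.Adj p r := stepC hB hac hab hbc.symm hap ncp nbp hpb hcr nar nbr hrb
  have eqr : G.Adj q r :=
    stepC hB hbc hab.symm hac.symm hbq ncq naq hqa hcr nbr nar hra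
  have hvb : v ≠ b := fun h => nbp (h ▸ hpv).symm
  by_cases h1 : G.Adj q v <;> by_cases h2 : G.Adj r v
  · exact noK4' hK hpv.symm h1.symm h2.symm epq epr eqr
  · exact noDia hD epq epr hpv eqr h1 h2 hvr.symm
  · exact noDia hD epr epq hpv eqr.symm h2 h1 hvq.symm
  · refine noBull hB epq epr eqr hpv hbq.symm h2 ?_ ?_ ?_ h1 hvr ?_ hvb
    · exact fun h => nbr h.symm
    · exact fun h => nbv h.symm
    · exact fun h => nbp h.symm
    · exact hrb.symm

end AuxClaim3

/-- Claim 3: in a connected `{B,D,K₄,K₂₃,P₂□P₃,P₇,C₇,F₁,…,F₅}`-free graph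
with `γ(G) ≥ 3`, every triangle contains a vertex of degree exactly `2`. -/
theorem claim3 {V : Type*} [Fintype V] (G : SimpleGraph V) [DecidableRel G.Adj]
    (hconn : G.Connected)
    (hB : _root_.Free G bull) (hDia : _root_.Free G diamond) (hK4 : _root_.Free G K4) (hK23 : _root_.Free G K23)
    (hP2P3 : _root_.Free G P2P3) (hP7 : _root_.Free G P7) (hC7 : _root_.Free G C7) (hF1 : _root_.Free G F1)
    (hF2 : _root_.Free G F2) (hF3 : _root_.Free G F3) (hF4 : _root_.Free G F4) (hF5 : _root_.Free G F5)
    (hdom : 3 ≤ domNum G) :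
    ∀ x₁ x₂ x₃ : V, G.Adj x₁ x₂ → G.Adj x₂ x₃ → G.Adj x₁ x₃ →
      ∃ x ∈ ({x₁, x₂, x₃} : Set V), G.degree x = 2 := by
  classical
  intro x1 x2 x3 h12 h23 h13
  by_contra hcon
  have hd : ∀ x, x = x1 ∨ x = x2 ∨ x = x3 → G.degree x ≠ 2 := by
    intro x hx h
    exact hcon ⟨x, by rcases hx with rfl|rfl|rfl <;> simp, h⟩
  have third : ∀ a b c : V, G.Adj a b → G.Adj a c → b ≠ c → G.degree a ≠ 2 →
      ∃ y, G.Adj a y ∧ y ≠ b ∧ y ≠ c := by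
    intro a b c hab hac hbc hd2
    by_contra h
    push_neg at h
    apply hd2
    have hnf : G.neighborFinset a = {b, c} := by
      ext y
      simp only [mem_neighborFinset, Finset.mem_insert, Finset.mem_singleton]
      constructor
      · intro hy
        rcases eq_or_ne y b with rfl|hyb
        · exact Or.inl rfl
        · exact Or.inr (h y hy hyb)
      · rintro (rfl|rfl) <;> assumption
    rw [← card_neighborFinset_eq_degree, hnf, Finset.card_pair hbc]
  obtain ⟨y1, a1, b1, c1⟩ := third x1 x2 x3 h12 h13 h23.ne (hd x1 (Or.inl rfl))
  obtain ⟨y2, a2, b2, c2⟩ := third x2 x1 x3 h12.symm h23 h13.ne (hd x2 (Or.inr (Or.inl rfl)))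
  obtain ⟨y3, a3, b3, c3⟩ := third x3 x1 x2 h13.symm h23.symm h12.ne (hd x3 (Or.inr (Or.inr rfl)))
  have n21 : ¬ G.Adj x2 y1 := fun h => noTwo hDia hK4 h12 h13 h23 a1 h c1
  have n31 : ¬ G.Adj x3 y1 := fun h => noTwo hDia hK4 h13 h12 h23.symm a1 h b1
  have n12 : ¬ G.Adj x1 y2 := fun h => noTwo hDia hK4 h12.symm h23 h13 a2 h c2
  have n32 : ¬ G.Adj x3 y2 := fun h => noTwo hDia hK4 h23 h12.symm h13.symm a2 h b2
  have n13 : ¬ G.Adj x1 y3 := fun h => noTwo hDia hK4 h13.symm h23.symm h12 a3 h c3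
  have n23 : ¬ G.Adj x2 y3 := fun h => noTwo hDia hK4 h23.symm h13.symm h12.symm a3 h b3
  have e23 : G.Adj y2 y3 := stepC hB h23 h12.symm h13.symm a2 n32 n12 b2 a3 n23 n13 b3
  have u1 : ∀ v, G.Adj x1 v → v ≠ x2 → v ≠ x3 → v = y1 := by
    intro v hv hv2 hv3
    by_contra hne
    have nv2 : ¬ G.Adj x2 v := fun h => noTwo hDia hK4 h12 h13 h23 hv h hv3
    have nv3 : ¬ G.Adj x3 v := fun h => noTwo hDia hK4 h13 h12 h23.symm hv h hv2
    exact stepD hB hDia h12 h13 h23 a1 n21 n31 b1 c1 a2 n12 n32 b2 c2 a3 n13 n23 b3 c3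
      hv nv2 nv3 hv2 hv3 hne
  have u2 : ∀ v, G.Adj x2 v → v ≠ x1 → v ≠ x3 → v = y2 := by
    intro v hv hv1 hv3
    by_contra hne
    have nv3 : ¬ G.Adj x3 v := fun h => noTwo hDia hK4 h23 h12.symm h13.symm hv h hv1
    have nv1 : ¬ G.Adj x1 v := fun h => noTwo hDia hK4 h12.symm h23 h13 hv h hv3
    exact stepD hB hDia h23 h12.symm h13.symm a2 n32 n12 c2 b2 a3 n23 n13 c3 b3
      a1 n21 n31 b1 c1 hv nv3 nv1 hv3 hv1 hne
  have u3 : ∀ v, G.Adj x3 v → v ≠ x1 → v ≠ x2 → v = y3 := by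
    intro v hv hv1 hv2
    by_contra hne
    have nv1 : ¬ G.Adj x1 v := fun h => noTwo hDia hK4 h13.symm h23.symm h12 hv h hv2
    have nv2 : ¬ G.Adj x2 v := fun h => noTwo hDia hK4 h23.symm h13.symm h12.symm hv h hv1
    exact stepD hB hDia h13.symm h23.symm h12 a3 n13 n23 b3 c3 a1 n31 n21 c1 b1
      a2 n32 n12 c2 b2 hv nv1 nv2 hv1 hv2 hne
  have w1 : ∀ v, G.Adj y1 v → v ≠ x1 → v ≠ x2 → v ≠ x3 → v ≠ y2 → v ≠ y3 → False := by
    intro v hv hvx1 hvx2 hvx3 hvy2 hvy3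
    have hvy1 : v ≠ y1 := fun h => G.irrefl (h ▸ hv)
    have nv1 : ¬ G.Adj x1 v := fun h => hvy1 (u1 v h hvx2 hvx3)
    have nv2 : ¬ G.Adj x2 v := fun h => hvy2 (u2 v h hvx1 hvx3)
    have nv3 : ¬ G.Adj x3 v := fun h => hvy3 (u3 v h hvx1 hvx2)
    exact yClosure hB hDia hK4 h12 h13 h23 a1 n21 n31 b1 c1 a2 n12 n32 b2 c2
      a3 n13 n23 b3 c3 hv nv1 nv2 nv3 hvy2 hvy3
  have w2 : ∀ v, G.Adj y2 v → v ≠ x1 → v ≠ x2 → v ≠ x3 → v ≠ y1 → v ≠ y3 → False := by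
    intro v hv hvx1 hvx2 hvx3 hvy1 hvy3
    have hvy2 : v ≠ y2 := fun h => G.irrefl (h ▸ hv)
    have nv1 : ¬ G.Adj x1 v := fun h => hvy1 (u1 v h hvx2 hvx3)
    have nv2 : ¬ G.Adj x2 v := fun h => hvy2 (u2 v h hvx1 hvx3)
    have nv3 : ¬ G.Adj x3 v := fun h => hvy3 (u3 v h hvx1 hvx2)
    exact yClosure hB hDia hK4 h23 h12.symm h13.symm a2 n32 n12 c2 b2 a3 n23 n13 c3 b3
      a1 n21 n31 b1 c1 hv nv2 nv3 nv1 hvy3 hvy1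
  have w3 : ∀ v, G.Adj y3 v → v ≠ x1 → v ≠ x2 → v ≠ x3 → v ≠ y1 → v ≠ y2 → False := by
    intro v hv hvx1 hvx2 hvx3 hvy1 hvy2
    have hvy3 : v ≠ y3 := fun h => G.irrefl (h ▸ hv)
    have nv1 : ¬ G.Adj x1 v := fun h => hvy1 (u1 v h hvx2 hvx3)
    have nv2 : ¬ G.Adj x2 v := fun h => hvy2 (u2 v h hvx1 hvx3)
    have nv3 : ¬ G.Adj x3 v := fun h => hvy3 (u3 v h hvx1 hvx2)
    exact yClosure hB hDia hK4 h13.symm h23.symm h12 a3 n13 n23 b3 c3 a1 n31 n21 c1 b1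
      a2 n32 n12 c2 b2 hv nv3 nv1 nv2 hvy1 hvy2
  have closure : ∀ u v, (u = x1 ∨ u = x2 ∨ u = x3 ∨ u = y1 ∨ u = y2 ∨ u = y3) →
      G.Adj u v → (v = x1 ∨ v = x2 ∨ v = x3 ∨ v = y1 ∨ v = y2 ∨ v = y3) := by
    intro u v hu huv
    by_cases e1 : v = x1
    · exact Or.inl e1
    by_cases e2 : v = x2
    · exact Or.inr (Or.inl e2)
    by_cases e3 : v = x3
    · exact Or.inr (Or.inr (Or.inl e3))
    by_cases e4 : v = y1
    · exact Or.inr (Or.inr (Or.inr (Or.inl e4)))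
    by_cases e5 : v = y2
    · exact Or.inr (Or.inr (Or.inr (Or.inr (Or.inl e5))))
    by_cases e6 : v = y3
    · exact Or.inr (Or.inr (Or.inr (Or.inr (Or.inr e6))))
    rcases hu with rfl|rfl|rfl|rfl|rfl|rfl
    · exact absurd (u1 v huv e2 e3) e4
    · exact absurd (u2 v huv e1 e3) e5
    · exact absurd (u3 v huv e1 e2) e6
    · exact (w1 v huv e1 e2 e3 e5 e6).elim
    · exact (w2 v huv e1 e2 e3 e4 e6).elim
    · exact (w3 v huv e1 e2 e3 e4 e5).elim
  have hall : ∀ v, v = x1 ∨ v = x2 ∨ v = x3 ∨ v = y1 ∨ v = y2 ∨ v = y3 := by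
    have wP : ∀ (u v : V), G.Walk u v →
        (u = x1 ∨ u = x2 ∨ u = x3 ∨ u = y1 ∨ u = y2 ∨ u = y3) →
        (v = x1 ∨ v = x2 ∨ v = x3 ∨ v = y1 ∨ v = y2 ∨ v = y3) := by
      intro u v p
      induction p with
      | nil => exact id
      | cons h q ih => exact fun hu => ih (closure _ _ hu h)
    intro v
    obtain ⟨p⟩ := hconn.preconnected x1 v
    exact wP _ _ p (Or.inl rfl)
  have hds : IsDomSet G {x1, y2} := by
    intro v hv
    rcases hall v with rfl|rfl|rfl|rfl|rfl|rfl
    · exact absurd (Finset.mem_insert_self _ _) hv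
    · exact ⟨x1, Finset.mem_insert_self _ _, h12⟩
    · exact ⟨x1, Finset.mem_insert_self _ _, h13⟩
    · exact ⟨x1, Finset.mem_insert_self _ _, a1⟩
    · exact absurd (by simp) hv
    · exact ⟨y2, by simp, e23⟩
  have hcard : ({x1, y2} : Finset V).card = 2 := Finset.card_pair b2.symm
  have hle : domNum G ≤ 2 :=
    Nat.sInf_le ⟨({x1, y2} : Finset V), hds, hcard⟩
  omega
end

section
/- Let G be a finite connected simple graph that is {B, D, K4, K_{2,3}, P2□P3, P7, C7, F1, F2, F3, F4, F5}-free and has γ(G) ≥ 3. Then every triangle of G contains at least two vertices whose degree in G is exactly 2. -/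
open SimpleGraph

section Embeddings

open SimpleGraph

instance graphOfList.adjDecidable (n : ℕ) (l : List (Fin n × Fin n)) :
    DecidableRel (graphOfList n l).Adj := fun a b =>
  decidable_of_iff' _ (SimpleGraph.fromRel_adj _ a b)

instance pathGraph.adjDecidable (n : ℕ) :
    DecidableRel (pathGraph n).Adj := fun _ _ =>
  decidable_of_iff' _ (SimpleGraph.pathGraph_adj)

instance K4.adjDecidable : DecidableRel K4.Adj := fun a b =>
  decidable_of_iff' _ (SimpleGraph.top_adj (v := a) (w := b))

instance P2P3.adjDecidable : DecidableRel P2P3.Adj := fun a b => by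
  have : P2P3.Adj a b ↔
      ((pathGraph 2).Adj a.1 b.1 ∧ a.2 = b.2) ∨ ((pathGraph 3).Adj a.2 b.2 ∧ a.1 = b.1) :=
    SimpleGraph.boxProd_adj
  exact decidable_of_iff' _ this

instance : DecidableRel bull.Adj := graphOfList.adjDecidable _ _
instance : DecidableRel diamond.Adj := graphOfList.adjDecidable _ _
instance : DecidableRel K23.Adj := graphOfList.adjDecidable _ _
instance : DecidableRel F1.Adj := graphOfList.adjDecidable _ _
instance : DecidableRel F4.Adj := graphOfList.adjDecidable _ _
instance : DecidableRel P7.Adj := pathGraph.adjDecidable _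

variable {V : Type*} {G : SimpleGraph V}

lemma no_induced {W : Type*} {H : SimpleGraph W}
    (hfree : _root_.Free G H) (f : W → V) (hinj : Function.Injective f)
    (hrel : ∀ i j, G.Adj (f i) (f j) ↔ H.Adj i j) : False :=
  hfree ⟨⟨⟨f, hinj⟩, hrel _ _⟩⟩

lemma no_K4 (hK4 : _root_.Free G K4) {a b c d : V}
    (hab : G.Adj a b) (hac : G.Adj a c) (had : G.Adj a d)
    (hbc : G.Adj b c) (hbd : G.Adj b d) (hcd : G.Adj c d) : False := by
  have e1 := hab.ne; have e2 := hac.ne; have e3 := had.ne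
  have e4 := hbc.ne; have e5 := hbd.ne; have e6 := hcd.ne
  apply no_induced hK4 ![a,b,c,d]
  · intro i j hij
    fin_cases i <;> fin_cases j <;>
      first
        | rfl
        | exact absurd hij (by assumption)
        | exact absurd hij.symm (by assumption)
  · intro i j
    fin_cases i <;> fin_cases j <;>
      exact ⟨fun h => by
          first
            | decide
            | exact (h.ne rfl).elim
            | exact absurd h (by assumption)
            | exact absurd h.symm (by assumption),
        fun h => by
          first
            | assumption
            | exact SimpleGraph.Adj.symm (by assumption)
            | exact absurd h (by decide)⟩

lemma no_diamond (hDia : _root_.Free G diamond) {a b c d : V}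
    (hab : G.Adj a b) (hac : G.Adj a c) (had : G.Adj a d)
    (hbc : G.Adj b c) (hbd : G.Adj b d) (hcd : ¬ G.Adj c d) (ecd : c ≠ d) : False := by
  have e1 := hab.ne; have e2 := hac.ne; have e3 := had.ne
  have e4 := hbc.ne; have e5 := hbd.ne
  apply no_induced hDia ![a,b,c,d]
  · intro i j hij
    fin_cases i <;> fin_cases j <;>
      first
        | rfl
        | exact absurd hij (by assumption)
        | exact absurd hij.symm (by assumption)
  · intro i j
    fin_cases i <;> fin_cases j <;>
      exact ⟨fun h => by
          first
            | decide
            | exact (h.ne rfl).elim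
            | exact absurd h (by assumption)
            | exact absurd h.symm (by assumption),
        fun h => by
          first
            | assumption
            | exact SimpleGraph.Adj.symm (by assumption)
            | exact absurd h (by decide)⟩

lemma no_bull (hB : _root_.Free G bull) {a b c p q : V}
    (hab : G.Adj a b) (hac : G.Adj a c) (hbc : G.Adj b c)
    (hap : G.Adj a p) (hbq : G.Adj b q)
    (hcp : ¬G.Adj c p) (hcq : ¬G.Adj c q) (hbp : ¬G.Adj b p) (haq : ¬G.Adj a q)
    (hpq : ¬G.Adj p q)
    (hcp' : c ≠ p) (hcq' : c ≠ q) (hbp' : b ≠ p) (haq' : a ≠ q) (hpq' : p ≠ q) : False := by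
  have h1 := hab.ne; have h2 := hac.ne; have h3 := hbc.ne
  have h4 := hap.ne; have h5 := hbq.ne
  apply no_induced hB ![a,b,c,p,q]
  · intro i j hij
    fin_cases i <;> fin_cases j <;>
      first
        | rfl
        | exact absurd hij (by assumption)
        | exact absurd hij.symm (by assumption)
  · intro i j
    fin_cases i <;> fin_cases j <;>
      exact ⟨fun h => by
          first
            | decide
            | exact (h.ne rfl).elim
            | exact absurd h (by assumption)
            | exact absurd h.symm (by assumption),
        fun h => by
          first
            | assumption
            | exact SimpleGraph.Adj.symm (by assumption)
            | exact absurd h (by decide)⟩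

lemma no_K23 (hK23 : _root_.Free G K23) {a q p p' b : V}
    (h1 : G.Adj a p) (h2 : G.Adj a p') (h3 : G.Adj a b)
    (h4 : G.Adj q p) (h5 : G.Adj q p') (h6 : G.Adj q b)
    (n1 : ¬G.Adj a q) (n2 : ¬G.Adj p p') (n3 : ¬G.Adj p b) (n4 : ¬G.Adj p' b)
    (e1 : a ≠ q) (e2 : p ≠ p') (e3 : p ≠ b) (e4 : p' ≠ b) : False := by
  have d1 := h1.ne; have d2 := h2.ne; have d3 := h3.ne
  have d4 := h4.ne; have d5 := h5.ne; have d6 := h6.ne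
  apply no_induced hK23 ![a,q,p,p',b]
  · intro i j hij
    fin_cases i <;> fin_cases j <;>
      first
        | rfl
        | exact absurd hij (by assumption)
        | exact absurd hij.symm (by assumption)
  · intro i j
    fin_cases i <;> fin_cases j <;>
      exact ⟨fun h => by
          first
            | decide
            | exact (h.ne rfl).elim
            | exact absurd h (by assumption)
            | exact absurd h.symm (by assumption),
        fun h => by
          first
            | assumption
            | exact SimpleGraph.Adj.symm (by assumption)
            | exact absurd h (by decide)⟩

lemma no_F1 (hF1 : _root_.Free G F1) {a0 a1 a2 b0 b1 b2 : V}
    (h1 : G.Adj a0 a1) (h2 : G.Adj a1 a2) (h3 : G.Adj a0 b0) (h4 : G.Adj a1 b1)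
    (h5 : G.Adj a2 b2)
    (n1 : ¬G.Adj a0 a2) (n2 : ¬G.Adj a0 b1) (n3 : ¬G.Adj a0 b2)
    (n4 : ¬G.Adj a1 b0) (n5 : ¬G.Adj a1 b2) (n6 : ¬G.Adj a2 b0) (n7 : ¬G.Adj a2 b1)
    (n8 : ¬G.Adj b0 b1) (n9 : ¬G.Adj b0 b2) (n10 : ¬G.Adj b1 b2)
    (e1 : a0 ≠ a2) (e2 : a0 ≠ b1) (e3 : a0 ≠ b2) (e4 : a1 ≠ b0) (e5 : a1 ≠ b2)
    (e6 : a2 ≠ b0) (e7 : a2 ≠ b1) (e8 : b0 ≠ b1) (e9 : b0 ≠ b2) (e10 : b1 ≠ b2) : False := by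
  have d1 := h1.ne; have d2 := h2.ne; have d3 := h3.ne
  have d4 := h4.ne; have d5 := h5.ne
  apply no_induced hF1 ![a0,a1,a2,b0,b1,b2]
  · intro i j hij
    fin_cases i <;> fin_cases j <;>
      first
        | rfl
        | exact absurd hij (by assumption)
        | exact absurd hij.symm (by assumption)
  · intro i j
    fin_cases i <;> fin_cases j <;>
      exact ⟨fun h => by
          first
            | decide
            | exact (h.ne rfl).elim
            | exact absurd h (by assumption)
            | exact absurd h.symm (by assumption),
        fun h => by
          first
            | assumption
            | exact SimpleGraph.Adj.symm (by assumption)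
            | exact absurd h (by decide)⟩

lemma no_F4 (hF4 : _root_.Free G F4) {v0 v1 v2 v3 v4 v5 v6 : V}
    (h1 : G.Adj v0 v1) (h2 : G.Adj v1 v2) (h3 : G.Adj v2 v3) (h4 : G.Adj v3 v0)
    (h5 : G.Adj v0 v4) (h6 : G.Adj v4 v5) (h7 : G.Adj v5 v6) (h8 : G.Adj v6 v0)
    (n1 : ¬G.Adj v0 v2) (n2 : ¬G.Adj v1 v3) (n3 : ¬G.Adj v1 v4) (n4 : ¬G.Adj v1 v5)
    (n5 : ¬G.Adj v1 v6) (n6 : ¬G.Adj v2 v4) (n7 : ¬G.Adj v2 v5) (n8 : ¬G.Adj v2 v6)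
    (n9 : ¬G.Adj v3 v4) (n10 : ¬G.Adj v3 v5) (n11 : ¬G.Adj v3 v6) (n12 : ¬G.Adj v4 v6)
    (n13 : ¬G.Adj v0 v5)
    (e1 : v0 ≠ v2) (e2 : v1 ≠ v3) (e3 : v1 ≠ v4) (e4 : v1 ≠ v5) (e5 : v1 ≠ v6)
    (e6 : v2 ≠ v4) (e7 : v2 ≠ v5) (e8 : v2 ≠ v6) (e9 : v3 ≠ v4) (e10 : v3 ≠ v5)
    (e11 : v3 ≠ v6) (e12 : v4 ≠ v6) (e13 : v0 ≠ v5) : False := by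
  have d1 := h1.ne; have d2 := h2.ne; have d3 := h3.ne; have d4 := h4.ne
  have d5 := h5.ne; have d6 := h6.ne; have d7 := h7.ne; have d8 := h8.ne
  apply no_induced hF4 ![v0,v1,v2,v3,v4,v5,v6]
  · intro i j hij
    fin_cases i <;> fin_cases j <;>
      first
        | rfl
        | exact absurd hij (by assumption)
        | exact absurd hij.symm (by assumption)
  · intro i j
    fin_cases i <;> fin_cases j <;>
      exact ⟨fun h => by
          first
            | decide
            | exact (h.ne rfl).elim
            | exact absurd h (by assumption)
            | exact absurd h.symm (by assumption),
        fun h => by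
          first
            | assumption
            | exact SimpleGraph.Adj.symm (by assumption)
            | exact absurd h (by decide)⟩

lemma no_P7 (hP7 : _root_.Free G P7) {v0 v1 v2 v3 v4 v5 v6 : V}
    (h1 : G.Adj v0 v1) (h2 : G.Adj v1 v2) (h3 : G.Adj v2 v3) (h4 : G.Adj v3 v4)
    (h5 : G.Adj v4 v5) (h6 : G.Adj v5 v6)
    (n02 : ¬G.Adj v0 v2) (n03 : ¬G.Adj v0 v3) (n04 : ¬G.Adj v0 v4) (n05 : ¬G.Adj v0 v5)
    (n06 : ¬G.Adj v0 v6) (n13 : ¬G.Adj v1 v3) (n14 : ¬G.Adj v1 v4) (n15 : ¬G.Adj v1 v5)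
    (n16 : ¬G.Adj v1 v6) (n24 : ¬G.Adj v2 v4) (n25 : ¬G.Adj v2 v5) (n26 : ¬G.Adj v2 v6)
    (n35 : ¬G.Adj v3 v5) (n36 : ¬G.Adj v3 v6) (n46 : ¬G.Adj v4 v6)
    (e02 : v0 ≠ v2) (e03 : v0 ≠ v3) (e04 : v0 ≠ v4) (e05 : v0 ≠ v5) (e06 : v0 ≠ v6)
    (e13 : v1 ≠ v3) (e14 : v1 ≠ v4) (e15 : v1 ≠ v5) (e16 : v1 ≠ v6)
    (e24 : v2 ≠ v4) (e25 : v2 ≠ v5) (e26 : v2 ≠ v6)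
    (e35 : v3 ≠ v5) (e36 : v3 ≠ v6) (e46 : v4 ≠ v6) : False := by
  have d1 := h1.ne; have d2 := h2.ne; have d3 := h3.ne
  have d4 := h4.ne; have d5 := h5.ne; have d6 := h6.ne
  apply no_induced hP7 ![v0,v1,v2,v3,v4,v5,v6]
  · intro i j hij
    fin_cases i <;> fin_cases j <;>
      first
        | rfl
        | exact absurd hij (by assumption)
        | exact absurd hij.symm (by assumption)
  · intro i j
    fin_cases i <;> fin_cases j <;>
      exact ⟨fun h => by
          first
            | decide
            | exact (h.ne rfl).elim
            | exact absurd h (by assumption)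
            | exact absurd h.symm (by assumption),
        fun h => by
          first
            | assumption
            | exact SimpleGraph.Adj.symm (by assumption)
            | exact absurd h (by decide)⟩

/-- P2□P3 grid: rows (a,b,c) and (d,e,f); rungs a-d, b-e, c-f. -/
lemma no_domino (hGrid : _root_.Free G P2P3) {a b c d e f : V}
    (h1 : G.Adj a b) (h2 : G.Adj b c) (h3 : G.Adj d e) (h4 : G.Adj e f)
    (h5 : G.Adj a d) (h6 : G.Adj b e) (h7 : G.Adj c f)
    (n1 : ¬G.Adj a c) (n2 : ¬G.Adj d f) (n3 : ¬G.Adj a e) (n4 : ¬G.Adj a f)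
    (n5 : ¬G.Adj b d) (n6 : ¬G.Adj b f) (n7 : ¬G.Adj c d) (n8 : ¬G.Adj c e)
    (e1 : a ≠ c) (e2 : d ≠ f) (e3 : a ≠ e) (e4 : a ≠ f)
    (e5 : b ≠ d) (e6 : b ≠ f) (e7 : c ≠ d) (e8 : c ≠ e) : False := by
  have d1 := h1.ne; have d2 := h2.ne; have d3 := h3.ne; have d4 := h4.ne
  have d5 := h5.ne; have d6 := h6.ne; have d7 := h7.ne
  apply no_induced hGrid (fun x => ![![a,b,c],![d,e,f]] x.1 x.2)
  · rintro ⟨i,j⟩ ⟨k,l⟩ hij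
    fin_cases i <;> fin_cases j <;> fin_cases k <;> fin_cases l <;>
      first
        | rfl
        | exact absurd hij (by assumption)
        | exact absurd hij.symm (by assumption)
  · rintro ⟨i,j⟩ ⟨k,l⟩
    fin_cases i <;> fin_cases j <;> fin_cases k <;> fin_cases l <;>
      exact ⟨fun h => by
          first
            | decide
            | exact (h.ne rfl).elim
            | exact absurd h (by assumption)
            | exact absurd h.symm (by assumption),
        fun h => by
          first
            | assumption
            | exact SimpleGraph.Adj.symm (by assumption)
            | exact absurd h (by decide)⟩

end Embeddings

section Structure

open SimpleGraph

variable {V : Type*} {G : SimpleGraph V}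

/-- No vertex outside a triangle is adjacent to two of its vertices. -/
lemma tri_no_common (hDia : _root_.Free G diamond) (hK4 : _root_.Free G K4)
    {a b c v : V} (hab : G.Adj a b) (hac : G.Adj a c) (hbc : G.Adj b c)
    (hva : G.Adj a v) (hvb : G.Adj b v) (hvc : v ≠ c) : False := by
  by_cases h : G.Adj c v
  · exact no_K4 hK4 hab hac hva hbc hvb h
  · exact no_diamond hDia hab hac hva hbc hvb h (fun hh => hvc hh.symm)

/-- Outside neighbours of distinct triangle vertices are adjacent (bull-freeness). -/
lemma cross_adj (hB : _root_.Free G bull) (hDia : _root_.Free G diamond) (hK4 : _root_.Free G K4)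
    {a b c p q : V}
    (hab : G.Adj a b) (hac : G.Adj a c) (hbc : G.Adj b c)
    (hap : G.Adj a p) (hpb : p ≠ b) (hpc : p ≠ c)
    (hbq : G.Adj b q) (hqa : q ≠ a) (hqc : q ≠ c) : G.Adj p q := by
  by_contra hpq
  have hbp : ¬ G.Adj b p := fun h => tri_no_common hDia hK4 hab hac hbc hap h hpc
  have hcp : ¬ G.Adj c p := fun h => tri_no_common hDia hK4 hac hab hbc.symm hap h hpb
  have haq : ¬ G.Adj a q := fun h => tri_no_common hDia hK4 hab.symm hbc hac hbq h hqc
  have hcq : ¬ G.Adj c q := fun h => tri_no_common hDia hK4 hbc hab.symm hac.symm hbq h hqa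
  have hpq' : p ≠ q := fun h => hbp (h ▸ hbq)
  exact no_bull hB hab hac hbc hap hbq hcp hcq hbp haq hpq hpc.symm hqc.symm hpb.symm
    hqa.symm hpq'

/-- Two outside neighbours of one triangle vertex are non-adjacent,
provided another triangle vertex also has an outside neighbour. -/
lemma no_two_nbrs_adj (hB : _root_.Free G bull) (hDia : _root_.Free G diamond) (hK4 : _root_.Free G K4)
    {a b c p p' q : V}
    (hab : G.Adj a b) (hac : G.Adj a c) (hbc : G.Adj b c)
    (hap : G.Adj a p) (hpb : p ≠ b) (hpc : p ≠ c)
    (hap' : G.Adj a p') (hp'b : p' ≠ b) (hp'c : p' ≠ c)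
    (hbq : G.Adj b q) (hqa : q ≠ a) (hqc : q ≠ c)
    (hpp' : G.Adj p p') : False := by
  have hpq := cross_adj hB hDia hK4 hab hac hbc hap hpb hpc hbq hqa hqc
  have hp'q := cross_adj hB hDia hK4 hab hac hbc hap' hp'b hp'c hbq hqa hqc
  have haq : ¬ G.Adj a q := fun h => tri_no_common hDia hK4 hab.symm hbc hac hbq h hqc
  exact no_diamond hDia hpp' hap.symm hpq hap'.symm hp'q haq hqa.symm

/-- A triangle vertex cannot have two outside neighbours if another triangle
vertex has an outside neighbour (K23-freeness). -/
lemma no_two_one (hB : _root_.Free G bull) (hDia : _root_.Free G diamond) (hK4 : _root_.Free G K4)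
    (hK23 : _root_.Free G K23) {a b c p p' q : V}
    (hab : G.Adj a b) (hac : G.Adj a c) (hbc : G.Adj b c)
    (hap : G.Adj a p) (hpb : p ≠ b) (hpc : p ≠ c)
    (hap' : G.Adj a p') (hp'b : p' ≠ b) (hp'c : p' ≠ c)
    (hpp'ne : p ≠ p')
    (hbq : G.Adj b q) (hqa : q ≠ a) (hqc : q ≠ c) : False := by
  have hpq := cross_adj hB hDia hK4 hab hac hbc hap hpb hpc hbq hqa hqc
  have hp'q := cross_adj hB hDia hK4 hab hac hbc hap' hp'b hp'c hbq hqa hqc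
  have hpp' : ¬ G.Adj p p' := fun h =>
    no_two_nbrs_adj hB hDia hK4 hab hac hbc hap hpb hpc hap' hp'b hp'c hbq hqa hqc h
  have haq : ¬ G.Adj a q := fun h => tri_no_common hDia hK4 hab.symm hbc hac hbq h hqc
  have hpbadj : ¬ G.Adj p b := fun h => tri_no_common hDia hK4 hab hac hbc hap h.symm hpc
  have hp'badj : ¬ G.Adj p' b := fun h => tri_no_common hDia hK4 hab hac hbc hap' h.symm hp'c
  exact no_K23 hK23 hap hap' hab hpq.symm hp'q.symm hbq.symm haq hpp' hpbadj hp'badj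
    hqa.symm hpp'ne hpb hp'b

/-- connectivity closure. -/
lemma closed_all (hconn : G.Connected) {P : V → Prop}
    {a : V} (ha : P a) (hcl : ∀ u, P u → ∀ v, G.Adj u v → P v) : ∀ v, P v := by
  have key : ∀ {u v : V}, G.Walk u v → P u → P v := by
    intro u v w
    induction w with
    | nil => exact id
    | cons h p ih => exact fun hu => ih (hcl _ hu _ h)
  intro v
  obtain ⟨w⟩ := hconn.preconnected a v
  exact key w ha

/-- A dominating pair contradicts `3 ≤ domNum`. -/
lemma dom2 [Fintype V] {a b : V} (hab : a ≠ b)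
    (h : ∀ v, v ≠ a → v ≠ b → ∃ u, (u = a ∨ u = b) ∧ G.Adj u v)
    (hdom : 3 ≤ domNum G) : False := by
  classical
  have h2 : domNum G ≤ 2 := by
    apply Nat.sInf_le
    refine ⟨{a, b}, ?_, ?_⟩
    · intro v hv
      simp only [Finset.mem_insert, Finset.mem_singleton] at hv
      push_neg at hv
      obtain ⟨u, hu, hadj⟩ := h v hv.1 hv.2
      exact ⟨u, by simp only [Finset.mem_insert, Finset.mem_singleton]; exact hu, hadj⟩
    · exact Finset.card_pair hab
  omega

end Structure

section Main

open SimpleGraph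

variable {V : Type*} {G : SimpleGraph V}

lemma caseII_main [Fintype V] (hconn : G.Connected)
    (hB : _root_.Free G bull) (hDia : _root_.Free G diamond) (hK4f : _root_.Free G K4) (hK23f : _root_.Free G K23)
    (hGrid : _root_.Free G P2P3) (hP7f : _root_.Free G P7) (hF1f : _root_.Free G F1) (hF4f : _root_.Free G F4)
    (hdom : 3 ≤ domNum G) {x1 x2 x3 y1 y2 : V}
    (h12 : G.Adj x1 x2) (h23 : G.Adj x2 x3) (h13 : G.Adj x1 x3)
    (hy1 : G.Adj x1 y1) (hy12 : y1 ≠ x2) (hy13 : y1 ≠ x3)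
    (hy2 : G.Adj x2 y2) (hy21 : y2 ≠ x1) (hy23 : y2 ≠ x3)
    (hx3 : ∀ w, G.Adj x3 w → w = x1 ∨ w = x2)
    (hA2e : ∀ v, G.Adj y2 v → v = y1 ∨ v = x2) : False := by
  classical
  have hny1x2 : ¬ G.Adj x2 y1 := fun h => tri_no_common hDia hK4f h12 h13 h23 hy1 h hy13
  have hny2x1 : ¬ G.Adj x1 y2 := fun h => tri_no_common hDia hK4f h12 h13 h23 h hy2 hy23
  have hny1x3 : ¬ G.Adj x3 y1 := fun h => by
    rcases hx3 _ h with e | e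
    · exact hy1.ne' e
    · exact hy12 e
  have hny2x3 : ¬ G.Adj x3 y2 := fun h => by
    rcases hx3 _ h with e | e
    · exact hy21 e
    · exact hy2.ne' e
  have U1 : ∀ w, G.Adj x1 w → w = x2 ∨ w = x3 ∨ w = y1 := by
    intro w hw
    by_contra hcon
    push_neg at hcon
    obtain ⟨w2, w3, wy⟩ := hcon
    exact no_two_one hB hDia hK4f hK23f h12 h13 h23 hw w2 w3 hy1 hy12 hy13 wy hy2 hy21 hy23
  have U2 : ∀ w, G.Adj x2 w → w = x1 ∨ w = x3 ∨ w = y2 := by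
    intro w hw
    by_contra hcon
    push_neg at hcon
    obtain ⟨w1, w3, wy⟩ := hcon
    exact no_two_one hB hDia hK4f hK23f h12.symm h23 h13 hw w1 w3 hy2 hy21 hy23 wy hy1
      hy12 hy13
  have hyy : G.Adj y1 y2 := cross_adj hB hDia hK4f h12 h13 h23 hy1 hy12 hy13 hy2 hy21 hy23
  -- Facts about members of A1 (outside neighbours of y1)
  have hA1f : ∀ s, G.Adj y1 s → s ≠ x1 → s ≠ y2 →
      ¬G.Adj y2 s ∧ ¬G.Adj x1 s ∧ ¬G.Adj x2 s ∧ ¬G.Adj x3 s ∧ s ≠ x2 ∧ s ≠ x3 := by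
    intro s hs hs1 hs2
    have hsx2 : s ≠ x2 := fun e => hny1x2 (by rw [e] at hs; exact hs.symm)
    have hsx3 : s ≠ x3 := fun e => hny1x3 (by rw [e] at hs; exact hs.symm)
    have hy2s : ¬G.Adj y2 s := fun h => by
      rcases hA2e s h with e | e
      · exact hs.ne' e
      · exact hsx2 e
    have hx1s : ¬G.Adj x1 s := fun h => by
      rcases U1 s h with e | e | e
      · exact hsx2 e
      · exact hsx3 e
      · exact hs.ne' e
    have hx2s : ¬G.Adj x2 s := fun h => by
      rcases U2 s h with e | e | e
      · exact hs1 e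
      · exact hsx3 e
      · exact hs2 e
    have hx3s : ¬G.Adj x3 s := fun h => by
      rcases hx3 s h with e | e
      · exact hs1 e
      · exact hsx2 e
    exact ⟨hy2s, hx1s, hx2s, hx3s, hsx2, hsx3⟩
  -- (c): an edge inside A1 forces closed neighbourhoods
  have hc : ∀ s s' t, (G.Adj y1 s ∧ s ≠ x1 ∧ s ≠ y2) → (G.Adj y1 s' ∧ s' ≠ x1 ∧ s' ≠ y2) →
      G.Adj s s' → G.Adj s t → t ≠ y1 → t ≠ s' → False := by
    intro s s' t hs hs' hss' hst ht1 hts'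
    obtain ⟨hy2s, hx1s, hx2s, hx3s, hsx2, hsx3⟩ := hA1f s hs.1 hs.2.1 hs.2.2
    have hcross : G.Adj t x1 :=
      cross_adj hB hDia hK4f hs.1.symm hss' hs'.1 hst ht1 hts' hy1.symm
        (fun e => hs.2.1 e.symm) (fun e => hs'.2.1 e.symm)
    rcases U1 t hcross.symm with e | e | e
    · exact hx2s (by rw [e] at hst; exact hst.symm)
    · exact hx3s (by rw [e] at hst; exact hst.symm)
    · exact ht1 e
  -- P1 (F4-freeness): no common outside neighbour of two A1 vertices
  have hp1 : ∀ s s' t, (G.Adj y1 s ∧ s ≠ x1 ∧ s ≠ y2) → (G.Adj y1 s' ∧ s' ≠ x1 ∧ s' ≠ y2) →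
      s ≠ s' → G.Adj s t → G.Adj s' t → ¬G.Adj y1 t → t ≠ y1 → False := by
    intro s s' t hs hs' hss'ne hst hs't hny1t ht1
    obtain ⟨hy2s, hx1s, hx2s, hx3s, hsx2, hsx3⟩ := hA1f s hs.1 hs.2.1 hs.2.2
    obtain ⟨hy2s', hx1s', hx2s', hx3s', hs'x2, hs'x3⟩ := hA1f s' hs'.1 hs'.2.1 hs'.2.2
    have et1 : t ≠ x1 := fun e => hx1s (by rw [e] at hst; exact hst.symm)
    have et2 : t ≠ x2 := fun e => hx2s (by rw [e] at hst; exact hst.symm)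
    have et3 : t ≠ y2 := fun e => hy2s (by rw [e] at hst; exact hst.symm)
    have et4 : t ≠ x3 := fun e => hx3s (by rw [e] at hst; exact hst.symm)
    have hx1t : ¬G.Adj x1 t := fun h => by
      rcases U1 t h with e | e | e
      · exact et2 e
      · exact et4 e
      · exact ht1 e
    have hx2t : ¬G.Adj x2 t := fun h => by
      rcases U2 t h with e | e | e
      · exact et1 e
      · exact et4 e
      · exact et3 e
    have hy2t : ¬G.Adj y2 t := fun h => by
      rcases hA2e t h with e | e
      · exact ht1 e
      · exact et2 e
    have hss' : ¬G.Adj s s' := fun h => hc s s' t hs hs' h hst ht1 hs't.ne'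
    exact no_F4 hF4f hy1.symm h12 hy2 hyy.symm hs.1 hst hs't.symm hs'.1.symm
      (fun h => hny1x2 h.symm) hny2x1 hx1s hx1t hx1s' hx2s hx2t hx2s' hy2s hy2t hy2s'
      hss' hny1t
      hy12 hy21.symm (fun e => hs.2.1 e.symm) et1.symm (fun e => hs'.2.1 e.symm)
      hsx2.symm et2.symm hs'x2.symm (fun e => hs.2.2 e.symm) et3.symm
      (fun e => hs'.2.2 e.symm) hss'ne (fun e => ht1 e.symm)
  -- P7-freeness propagation
  have hp7 : ∀ s p t, (G.Adj y1 s ∧ s ≠ x1 ∧ s ≠ y2) → G.Adj s p → ¬G.Adj y1 p → p ≠ y1 →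
      G.Adj p t → ¬G.Adj y1 t → t ≠ y1 → ¬G.Adj s t → False := by
    intro s p t hs hsp hny1p hpy1 hpt hny1t ht1 hnst
    obtain ⟨hy2s, hx1s, hx2s, hx3s, hsx2, hsx3⟩ := hA1f s hs.1 hs.2.1 hs.2.2
    have epx1 : p ≠ x1 := fun e => hny1p (by rw [e]; exact hy1.symm)
    have epx2 : p ≠ x2 := fun e => hx2s (by rw [e] at hsp; exact hsp.symm)
    have epx3 : p ≠ x3 := fun e => hx3s (by rw [e] at hsp; exact hsp.symm)
    have epy2 : p ≠ y2 := fun e => hy2s (by rw [e] at hsp; exact hsp.symm)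
    have hx1p : ¬G.Adj x1 p := fun h => by
      rcases U1 p h with e | e | e
      · exact epx2 e
      · exact epx3 e
      · exact hpy1 e
    have hx2p : ¬G.Adj x2 p := fun h => by
      rcases U2 p h with e | e | e
      · exact epx1 e
      · exact epx3 e
      · exact epy2 e
    have hy2p : ¬G.Adj y2 p := fun h => by
      rcases hA2e p h with e | e
      · exact hpy1 e
      · exact epx2 e
    have hx3p : ¬G.Adj x3 p := fun h => by
      rcases hx3 p h with e | e
      · exact epx1 e
      · exact epx2 e
    have etx1 : t ≠ x1 := fun e => hny1t (by rw [e]; exact hy1.symm)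
    have etx2 : t ≠ x2 := fun e => hx2p (by rw [e] at hpt; exact hpt.symm)
    have etx3 : t ≠ x3 := fun e => hx3p (by rw [e] at hpt; exact hpt.symm)
    have ety2 : t ≠ y2 := fun e => hy2p (by rw [e] at hpt; exact hpt.symm)
    have hx1t : ¬G.Adj x1 t := fun h => by
      rcases U1 t h with e | e | e
      · exact etx2 e
      · exact etx3 e
      · exact ht1 e
    have hx2t : ¬G.Adj x2 t := fun h => by
      rcases U2 t h with e | e | e
      · exact etx1 e
      · exact etx3 e
      · exact ety2 e
    have hy2t : ¬G.Adj y2 t := fun h => by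
      rcases hA2e t h with e | e
      · exact ht1 e
      · exact etx2 e
    have hx3t : ¬G.Adj x3 t := fun h => by
      rcases hx3 t h with e | e
      · exact etx1 e
      · exact etx2 e
    have ets : t ≠ s := fun e => hny1t (by rw [e]; exact hs.1)
    exact no_P7 hP7f hpt.symm hsp.symm hs.1.symm hyy hy2.symm h23
      (fun h => hnst h.symm) (fun h => hny1t h.symm) (fun h => hy2t h.symm)
      (fun h => hx2t h.symm) (fun h => hx3t h.symm)
      (fun h => hny1p h.symm) (fun h => hy2p h.symm) (fun h => hx2p h.symm) (fun h => hx3p h.symm)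
      (fun h => hy2s h.symm) (fun h => hx2s h.symm) (fun h => hx3s h.symm)
      (fun h => hny1x2 h.symm) (fun h => hny1x3 h.symm) (fun h => hny2x3 h.symm)
      ets ht1 ety2 etx2 etx3 hpy1 epy2 epx2 epx3 hs.2.2 hsx2 hsx3 hy12 hy13 hy23
  -- every vertex is in the "good" set
  have hGood : ∀ v, (v = x1 ∨ v = x2 ∨ v = x3 ∨ v = y1 ∨ v = y2) ∨ G.Adj y1 v ∨
      (∃ s, (G.Adj y1 s ∧ s ≠ x1 ∧ s ≠ y2) ∧ G.Adj s v) := by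
    have easy : ∀ u v : V, G.Adj y1 u → G.Adj u v →
        (v = x1 ∨ v = x2 ∨ v = x3 ∨ v = y1 ∨ v = y2) ∨ G.Adj y1 v ∨
        (∃ s, (G.Adj y1 s ∧ s ≠ x1 ∧ s ≠ y2) ∧ G.Adj s v) := by
      intro u v hy1u huv
      by_cases h1' : u = x1
      · subst h1'
        rcases U1 v huv with e | e | e
        · exact Or.inl (Or.inr (Or.inl e))
        · exact Or.inl (Or.inr (Or.inr (Or.inl e)))
        · exact Or.inl (Or.inr (Or.inr (Or.inr (Or.inl e))))
      by_cases h2' : u = y2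
      · subst h2'
        rcases hA2e v huv with e | e
        · exact Or.inl (Or.inr (Or.inr (Or.inr (Or.inl e))))
        · exact Or.inl (Or.inr (Or.inl e))
      · exact Or.inr (Or.inr ⟨u, ⟨hy1u, h1', h2'⟩, huv⟩)
    refine closed_all hconn (P := fun v => (v = x1 ∨ v = x2 ∨ v = x3 ∨ v = y1 ∨ v = y2) ∨
      G.Adj y1 v ∨ (∃ s, (G.Adj y1 s ∧ s ≠ x1 ∧ s ≠ y2) ∧ G.Adj s v)) (a := x1)
      (Or.inl (Or.inl rfl)) ?_
    intro u hu v huv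
    rcases hu with (e | e | e | e | e) | hy1u | ⟨s, hs, hsu⟩
    · subst e
      rcases U1 v huv with e | e | e
      · exact Or.inl (Or.inr (Or.inl e))
      · exact Or.inl (Or.inr (Or.inr (Or.inl e)))
      · exact Or.inl (Or.inr (Or.inr (Or.inr (Or.inl e))))
    · subst e
      rcases U2 v huv with e | e | e
      · exact Or.inl (Or.inl e)
      · exact Or.inl (Or.inr (Or.inr (Or.inl e)))
      · exact Or.inl (Or.inr (Or.inr (Or.inr (Or.inr e))))
    · subst e
      rcases hx3 v huv with e | e
      · exact Or.inl (Or.inl e)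
      · exact Or.inl (Or.inr (Or.inl e))
    · subst e
      exact Or.inr (Or.inl huv)
    · subst e
      rcases hA2e v huv with e | e
      · exact Or.inl (Or.inr (Or.inr (Or.inr (Or.inl e))))
      · exact Or.inl (Or.inr (Or.inl e))
    · exact easy u v hy1u huv
    · by_cases hy1u : G.Adj y1 u
      · exact easy u v hy1u huv
      by_cases huy1 : u = y1
      · subst huy1
        exact Or.inr (Or.inl huv)
      by_cases hy1v : G.Adj y1 v
      · exact Or.inr (Or.inl hy1v)
      by_cases hHmv : v = x1 ∨ v = x2 ∨ v = x3 ∨ v = y1 ∨ v = y2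
      · exact Or.inl hHmv
      by_cases hsv : G.Adj s v
      · exact Or.inr (Or.inr ⟨s, hs, hsv⟩)
      · have hvy1 : v ≠ y1 := fun e => hHmv (Or.inr (Or.inr (Or.inr (Or.inl e))))
        exact (hp7 s u v hs hsu hy1u huy1 huv hy1v hvy1 hsv).elim
  -- final case analysis
  by_cases hT : ∃ s t, (G.Adj y1 s ∧ s ≠ x1 ∧ s ≠ y2) ∧ G.Adj s t ∧ ¬G.Adj y1 t ∧ t ≠ y1
  · obtain ⟨s, t, hs, hst, hnyt, ht1⟩ := hT
    obtain ⟨hy2s, hx1s, hx2s, hx3s, hsx2, hsx3⟩ := hA1f s hs.1 hs.2.1 hs.2.2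
    have uniq : ∀ s', (G.Adj y1 s' ∧ s' ≠ x1 ∧ s' ≠ y2) → s' = s := by
      intro s' hs'
      by_contra hne
      obtain ⟨hy2s', hx1s', hx2s', hx3s', hs'x2, hs'x3⟩ := hA1f s' hs'.1 hs'.2.1 hs'.2.2
      have hny2t : ¬G.Adj y2 t := fun h => by
        rcases hA2e t h with e | e
        · exact ht1 e
        · exact hx2s (by rw [e] at hst; exact hst.symm)
      have hnx2t : ¬G.Adj x2 t := fun h => by
        rcases U2 t h with e | e | e
        · exact hx1s (by rw [e] at hst; exact hst.symm)
        · exact hx3s (by rw [e] at hst; exact hst.symm)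
        · exact hy2s (by rw [e] at hst; exact hst.symm)
      have hnss' : ¬G.Adj s s' := fun h =>
        hc s s' t hs hs' h hst ht1 (fun e => hnyt (by rw [e]; exact hs'.1))
      have hns't : ¬G.Adj s' t := fun h =>
        hp1 s s' t hs hs' (fun e => hne e.symm) hst h hnyt ht1
      exact no_F1 hF1f hyy.symm hs.1 hy2.symm hs'.1 hst
        hy2s hy2s' hny2t (fun h => hny1x2 h.symm) hnyt
        (fun h => hx2s h.symm) hnss' hx2s' hnx2t hns't
        (fun e => hs.2.2 e.symm) (fun e => hs'.2.2 e.symm)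
        (fun e => hy2s (by rw [← e] at hst; exact hst.symm))
        hy12 (fun e => ht1 e.symm) hsx2 (fun e => hne e.symm)
        (fun e => hs'x2 e.symm)
        (fun e => hx2s (by rw [← e] at hst; exact hst.symm))
        (fun e => hnyt (by rw [← e]; exact hs'.1))
    refine dom2 (a := s) (b := x2) hsx2 ?_ hdom
    intro v hv1 hv2
    rcases hGood v with (e | e | e | e | e) | hy1v | ⟨s', hs', hs'v⟩
    · exact ⟨x2, Or.inr rfl, by rw [e]; exact h12.symm⟩
    · exact absurd e hv2
    · exact ⟨x2, Or.inr rfl, by rw [e]; exact h23⟩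
    · exact ⟨s, Or.inl rfl, by rw [e]; exact hs.1.symm⟩
    · exact ⟨x2, Or.inr rfl, by rw [e]; exact hy2⟩
    · by_cases e1 : v = x1
      · exact ⟨x2, Or.inr rfl, by rw [e1]; exact h12.symm⟩
      by_cases e2 : v = y2
      · exact ⟨x2, Or.inr rfl, by rw [e2]; exact hy2⟩
      · exact absurd (uniq v ⟨hy1v, e1, e2⟩) hv1
    · have := uniq s' hs'
      exact ⟨s, Or.inl rfl, by rw [← this]; exact hs'v⟩
  · refine dom2 (a := y1) (b := x2) hy12 ?_ hdom
    intro v hv1 hv2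
    rcases hGood v with (e | e | e | e | e) | hy1v | ⟨s, hs, hsv⟩
    · exact ⟨x2, Or.inr rfl, by rw [e]; exact h12.symm⟩
    · exact absurd e hv2
    · exact ⟨x2, Or.inr rfl, by rw [e]; exact h23⟩
    · exact absurd e hv1
    · exact ⟨x2, Or.inr rfl, by rw [e]; exact hy2⟩
    · exact ⟨y1, Or.inl rfl, hy1v⟩
    · by_cases hy1v : G.Adj y1 v
      · exact ⟨y1, Or.inl rfl, hy1v⟩
      · exact absurd ⟨s, v, hs, hsv, hy1v, hv1⟩ hT

end Main

lemma core {V : Type*} {G : SimpleGraph V} [Fintype V] (hconn : G.Connected)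
    (hB : _root_.Free G bull) (hDia : _root_.Free G diamond) (hK4f : _root_.Free G K4) (hK23f : _root_.Free G K23)
    (hGrid : _root_.Free G P2P3) (hP7f : _root_.Free G P7) (hF1f : _root_.Free G F1) (hF4f : _root_.Free G F4)
    (hdom : 3 ≤ domNum G) {x1 x2 x3 y1 y2 : V}
    (h12 : G.Adj x1 x2) (h23 : G.Adj x2 x3) (h13 : G.Adj x1 x3)
    (hy1 : G.Adj x1 y1) (hy12 : y1 ≠ x2) (hy13 : y1 ≠ x3)
    (hy2 : G.Adj x2 y2) (hy21 : y2 ≠ x1) (hy23 : y2 ≠ x3) : False := by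
  classical
  have hny1x2 : ¬ G.Adj x2 y1 := fun h => tri_no_common hDia hK4f h12 h13 h23 hy1 h hy13
  have hny2x1 : ¬ G.Adj x1 y2 := fun h => tri_no_common hDia hK4f h12 h13 h23 h hy2 hy23
  have hny1x3 : ¬ G.Adj x3 y1 := fun h =>
    tri_no_common hDia hK4f h13 h12 h23.symm hy1 h hy12
  have hny2x3 : ¬ G.Adj x3 y2 := fun h =>
    tri_no_common hDia hK4f h23 h12.symm h13.symm hy2 h hy21
  have U1 : ∀ w, G.Adj x1 w → w = x2 ∨ w = x3 ∨ w = y1 := by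
    intro w hw
    by_contra hcon
    push_neg at hcon
    obtain ⟨w2, w3, wy⟩ := hcon
    exact no_two_one hB hDia hK4f hK23f h12 h13 h23 hw w2 w3 hy1 hy12 hy13 wy hy2 hy21 hy23
  have U2 : ∀ w, G.Adj x2 w → w = x1 ∨ w = x3 ∨ w = y2 := by
    intro w hw
    by_contra hcon
    push_neg at hcon
    obtain ⟨w1, w3, wy⟩ := hcon
    exact no_two_one hB hDia hK4f hK23f h12.symm h23 h13 hw w1 w3 hy2 hy21 hy23 wy hy1
      hy12 hy13
  have hyy : G.Adj y1 y2 := cross_adj hB hDia hK4f h12 h13 h23 hy1 hy12 hy13 hy2 hy21 hy23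
  by_cases hz : ∃ z, G.Adj x3 z ∧ z ≠ x1 ∧ z ≠ x2
  · -- Case I: prism
    obtain ⟨z, hz3, hz1, hz2⟩ := hz
    have U3 : ∀ w, G.Adj x3 w → w = x1 ∨ w = x2 ∨ w = z := by
      intro w hw
      by_contra hcon
      push_neg at hcon
      obtain ⟨w1, w2, wz⟩ := hcon
      exact no_two_one hB hDia hK4f hK23f h13.symm h23.symm h12 hw w1 w2 hz3 hz1 hz2 wz
        hy1 hy13 hy12
    have hzy1 : G.Adj z y1 :=
      cross_adj hB hDia hK4f h13.symm h23.symm h12 hz3 hz1 hz2 hy1 hy13 hy12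
    have hzy2 : G.Adj z y2 :=
      cross_adj hB hDia hK4f h23.symm h13.symm h12.symm hz3 hz2 hz1 hy2 hy23 hy21
    have ezy1 : z ≠ y1 := fun e => hny1x3 (by rw [← e]; exact hz3)
    have ezy2 : z ≠ y2 := fun e => hny2x3 (by rw [← e]; exact hz3)
    have hP : ∀ v, v = x1 ∨ v = x2 ∨ v = x3 ∨ v = y1 ∨ v = y2 ∨ v = z := by
      refine closed_all hconn
        (P := fun v => v = x1 ∨ v = x2 ∨ v = x3 ∨ v = y1 ∨ v = y2 ∨ v = z) (a := x1)
        (Or.inl rfl) ?_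
      intro u hu v huv
      rcases hu with e | e | e | e | e | e
      · subst e
        rcases U1 v huv with e | e | e
        · exact Or.inr (Or.inl e)
        · exact Or.inr (Or.inr (Or.inl e))
        · exact Or.inr (Or.inr (Or.inr (Or.inl e)))
      · subst e
        rcases U2 v huv with e | e | e
        · exact Or.inl e
        · exact Or.inr (Or.inr (Or.inl e))
        · exact Or.inr (Or.inr (Or.inr (Or.inr (Or.inl e))))
      · subst e
        rcases U3 v huv with e | e | e
        · exact Or.inl e
        · exact Or.inr (Or.inl e)
        · exact Or.inr (Or.inr (Or.inr (Or.inr (Or.inr e))))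
      · subst e
        by_contra hcon
        push_neg at hcon
        obtain ⟨n1, n2, n3, n4, n5, n6⟩ := hcon
        have hvx2 : G.Adj v x2 :=
          cross_adj hB hDia hK4f hyy hzy1.symm hzy2.symm huv n5 n6 hy2.symm
            (Ne.symm hy12) (Ne.symm hz2)
        rcases U2 v hvx2.symm with e | e | e
        · exact n1 e
        · exact n3 e
        · exact n5 e
      · subst e
        by_contra hcon
        push_neg at hcon
        obtain ⟨n1, n2, n3, n4, n5, n6⟩ := hcon
        have hvx1 : G.Adj v x1 :=
          cross_adj hB hDia hK4f hyy.symm hzy2.symm hzy1.symm huv n4 n6 hy1.symm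
            (Ne.symm hy21) (Ne.symm hz1)
        rcases U1 v hvx1.symm with e | e | e
        · exact n2 e
        · exact n3 e
        · exact n4 e
      · subst e
        by_contra hcon
        push_neg at hcon
        obtain ⟨n1, n2, n3, n4, n5, n6⟩ := hcon
        have hvx1 : G.Adj v x1 :=
          cross_adj hB hDia hK4f hzy1 hzy2 hyy huv n4 n5 hy1.symm
            (Ne.symm hz1) (Ne.symm hy21)
        rcases U1 v hvx1.symm with e | e | e
        · exact n2 e
        · exact n3 e
        · exact n4 e
    refine dom2 (a := x1) (b := z) (Ne.symm hz1) ?_ hdom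
    intro v hv1 hv2
    rcases hP v with e | e | e | e | e | e
    · exact absurd e hv1
    · exact ⟨x1, Or.inl rfl, by rw [e]; exact h12⟩
    · exact ⟨x1, Or.inl rfl, by rw [e]; exact h13⟩
    · exact ⟨x1, Or.inl rfl, by rw [e]; exact hy1⟩
    · exact ⟨z, Or.inr rfl, by rw [e]; exact hzy2⟩
    · exact absurd e hv2
  · -- Case II
    have hx3' : ∀ w, G.Adj x3 w → w = x1 ∨ w = x2 := by
      intro w hw
      by_contra hcon
      push_neg at hcon
      exact hz ⟨w, hw, hcon.1, hcon.2⟩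
    -- (a): no common neighbour of y1 and y2
    have haa : ∀ s, G.Adj y1 s → G.Adj y2 s → False := by
      intro s hs1 hs2
      have hsx1 : s ≠ x1 := fun e => hny2x1 (by rw [e] at hs2; exact hs2.symm)
      have hsx2 : s ≠ x2 := fun e => hny1x2 (by rw [e] at hs1; exact hs1.symm)
      have hsx3 : s ≠ x3 := fun e => hny1x3 (by rw [e] at hs1; exact hs1.symm)
      have Uy1 : ∀ w, G.Adj y1 w → w = y2 ∨ w = s ∨ w = x1 := by
        intro w hw
        by_contra hcon
        push_neg at hcon
        obtain ⟨n1, n2, n3⟩ := hcon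
        exact no_two_one hB hDia hK4f hK23f hyy hs1 hs2 hw n1 n2 hy1.symm
          (Ne.symm hy21) (Ne.symm hsx1) n3 hy2.symm (Ne.symm hy12) (Ne.symm hsx2)
      have Uy2 : ∀ w, G.Adj y2 w → w = y1 ∨ w = s ∨ w = x2 := by
        intro w hw
        by_contra hcon
        push_neg at hcon
        obtain ⟨n1, n2, n3⟩ := hcon
        exact no_two_one hB hDia hK4f hK23f hyy.symm hs2 hs1 hw n1 n2 hy2.symm
          (Ne.symm hy12) (Ne.symm hsx2) n3 hy1.symm (Ne.symm hy21) (Ne.symm hsx1)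
      have hsr : ∀ r, G.Adj s r → r = y1 ∨ r = y2 := by
        intro r hr
        by_contra hcon
        push_neg at hcon
        obtain ⟨n1, n2⟩ := hcon
        have hrx1 : G.Adj r x1 :=
          cross_adj hB hDia hK4f hs1.symm hs2.symm hyy hr n1 n2 hy1.symm
            (Ne.symm hsx1) (Ne.symm hy21)
        rcases U1 r hrx1.symm with e | e | e
        · rw [e] at hr
          rcases U2 s hr.symm with f | f | f
          · exact hsx1 f
          · exact hsx3 f
          · exact hs2.ne' f
        · rw [e] at hr
          rcases hx3' s hr.symm with f | f
          · exact hsx1 f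
          · exact hsx2 f
        · exact n1 e
      have hQ : ∀ v, v = x1 ∨ v = x2 ∨ v = x3 ∨ v = y1 ∨ v = y2 ∨ v = s := by
        refine closed_all hconn
          (P := fun v => v = x1 ∨ v = x2 ∨ v = x3 ∨ v = y1 ∨ v = y2 ∨ v = s) (a := x1)
          (Or.inl rfl) ?_
        intro u hu v huv
        rcases hu with e | e | e | e | e | e
        · subst e
          rcases U1 v huv with e | e | e
          · exact Or.inr (Or.inl e)
          · exact Or.inr (Or.inr (Or.inl e))
          · exact Or.inr (Or.inr (Or.inr (Or.inl e)))
        · subst e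
          rcases U2 v huv with e | e | e
          · exact Or.inl e
          · exact Or.inr (Or.inr (Or.inl e))
          · exact Or.inr (Or.inr (Or.inr (Or.inr (Or.inl e))))
        · subst e
          rcases hx3' v huv with e | e
          · exact Or.inl e
          · exact Or.inr (Or.inl e)
        · subst e
          rcases Uy1 v huv with e | e | e
          · exact Or.inr (Or.inr (Or.inr (Or.inr (Or.inl e))))
          · exact Or.inr (Or.inr (Or.inr (Or.inr (Or.inr e))))
          · exact Or.inl e
        · subst e
          rcases Uy2 v huv with e | e | e
          · exact Or.inr (Or.inr (Or.inr (Or.inl e)))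
          · exact Or.inr (Or.inr (Or.inr (Or.inr (Or.inr e))))
          · exact Or.inr (Or.inl e)
        · subst e
          rcases hsr v huv with e | e
          · exact Or.inr (Or.inr (Or.inr (Or.inl e)))
          · exact Or.inr (Or.inr (Or.inr (Or.inr (Or.inl e))))
      refine dom2 (a := y1) (b := x2) hy12 ?_ hdom
      intro v hv1 hv2
      rcases hQ v with e | e | e | e | e | e
      · exact ⟨y1, Or.inl rfl, by rw [e]; exact hy1.symm⟩
      · exact absurd e hv2
      · exact ⟨x2, Or.inr rfl, by rw [e]; exact h23⟩
      · exact absurd e hv1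
      · exact ⟨y1, Or.inl rfl, by rw [e]; exact hyy⟩
      · exact ⟨y1, Or.inl rfl, by rw [e]; exact hs1⟩
    -- (g): A1 and A2 cannot both be nonempty
    have hg : ∀ s u, G.Adj y1 s → s ≠ x1 → s ≠ y2 → G.Adj y2 u → u ≠ x2 → u ≠ y1 →
        False := by
      intro s u hs hs1 hs2 hu hu2 hu1
      have hsx2 : s ≠ x2 := fun e => hny1x2 (by rw [e] at hs; exact hs.symm)
      have hsx3 : s ≠ x3 := fun e => hny1x3 (by rw [e] at hs; exact hs.symm)
      have hux1 : u ≠ x1 := fun e => hny2x1 (by rw [e] at hu; exact hu.symm)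
      have hux3 : u ≠ x3 := fun e => hny2x3 (by rw [e] at hu; exact hu.symm)
      have hny2s : ¬G.Adj y2 s := fun h => haa s hs h
      have hny1u : ¬G.Adj y1 u := fun h => haa u h hu
      have hnx1s : ¬G.Adj x1 s := fun h => by
        rcases U1 s h with e | e | e
        · exact hsx2 e
        · exact hsx3 e
        · exact hs.ne' e
      have hnx2s : ¬G.Adj x2 s := fun h => by
        rcases U2 s h with e | e | e
        · exact hs1 e
        · exact hsx3 e
        · exact hs2 e
      have hnx3s : ¬G.Adj x3 s := fun h => by
        rcases hx3' s h with e | e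
        · exact hs1 e
        · exact hsx2 e
      have hnx1u : ¬G.Adj x1 u := fun h => by
        rcases U1 u h with e | e | e
        · exact hu2 e
        · exact hux3 e
        · exact hu1 e
      have hnx2u : ¬G.Adj x2 u := fun h => by
        rcases U2 u h with e | e | e
        · exact hux1 e
        · exact hux3 e
        · exact hu.ne' e
      have hnx3u : ¬G.Adj x3 u := fun h => by
        rcases hx3' u h with e | e
        · exact hux1 e
        · exact hu2 e
      have hsu_ne : s ≠ u := fun e => hny2s (by rw [← e] at hu; exact hu)
      by_cases hsu : G.Adj s u
      · exact no_domino hGrid hy1 hs hy2 hu h12 hyy hsu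
          hnx1s hnx2u hny2x1 hnx1u (fun h => hny1x2 h.symm) hny1u
          (fun h => hnx2s h.symm) (fun h => hny2s h.symm)
          (Ne.symm hs1) (Ne.symm hu2) (Ne.symm hy21) (Ne.symm hux1)
          hy12 (Ne.symm hu1) hsx2 hs2
      · exact no_F1 hF1f hyy hy2.symm hs hu h23
          (fun h => hny1x2 h.symm) hny1u (fun h => hny1x3 h.symm) hny2s
          (fun h => hny2x3 h.symm) hnx2s hnx2u hsu (fun h => hnx3s h.symm)
          (fun h => hnx3u h.symm)
          hy12 (Ne.symm hu1) hy13 (Ne.symm hs2) hy23 (Ne.symm hsx2) (Ne.symm hu2)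
          hsu_ne hsx3 hux3
    by_cases hA2 : ∃ u, G.Adj y2 u ∧ u ≠ x2 ∧ u ≠ y1
    · obtain ⟨u, hu, hu2, hu1⟩ := hA2
      have hA1e : ∀ v, G.Adj y1 v → v = y2 ∨ v = x1 := by
        intro v hv
        by_contra hcon
        push_neg at hcon
        exact hg v u hv hcon.2 hcon.1 hu hu2 hu1
      exact caseII_main hconn hB hDia hK4f hK23f hGrid hP7f hF1f hF4f hdom
        h12.symm h13 h23 hy2 hy21 hy23 hy1 hy12 hy13
        (fun w hw => (hx3' w hw).symm) hA1e
    · have hA2e : ∀ v, G.Adj y2 v → v = y1 ∨ v = x2 := by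
        intro v hv
        by_contra hcon
        push_neg at hcon
        exact hA2 ⟨v, hv, hcon.2, hcon.1⟩
      exact caseII_main hconn hB hDia hK4f hK23f hGrid hP7f hF1f hF4f hdom
        h12 h23 h13 hy1 hy12 hy13 hy2 hy21 hy23 hx3' hA2e

/-- Claim 4: in a connected `{B,D,K₄,K₂₃,P₂□P₃,P₇,C₇,F₁,…,F₅}`-free graph
with `γ(G) ≥ 3`, every triangle contains two vertices of degree exactly `2`. -/
theorem claim4 {V : Type*} [Fintype V] (G : SimpleGraph V) [DecidableRel G.Adj]
    (hconn : G.Connected)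
    (hB : _root_.Free G bull) (hDia : _root_.Free G diamond) (hK4 : _root_.Free G K4) (hK23 : _root_.Free G K23)
    (hP2P3 : _root_.Free G P2P3) (hP7 : _root_.Free G P7) (hC7 : _root_.Free G C7) (hF1 : _root_.Free G F1)
    (hF2 : _root_.Free G F2) (hF3 : _root_.Free G F3) (hF4 : _root_.Free G F4) (hF5 : _root_.Free G F5)
    (hdom : 3 ≤ domNum G) :
    ∀ x₁ x₂ x₃ : V, G.Adj x₁ x₂ → G.Adj x₂ x₃ → G.Adj x₁ x₃ →
      ∃ a ∈ ({x₁, x₂, x₃} : Set V), ∃ b ∈ ({x₁, x₂, x₃} : Set V),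
        a ≠ b ∧ G.degree a = 2 ∧ G.degree b = 2 := by
  intro x1 x2 x3 h12 h23 h13
  classical
  have deg2 : ∀ (a b c : V), G.Adj a b → G.Adj a c → b ≠ c →
      (∀ y, G.Adj a y → y = b ∨ y = c) → G.degree a = 2 := by
    intro a b c hab hac hbc hall
    have hnf : G.neighborFinset a = {b, c} := by
      ext w
      simp only [SimpleGraph.mem_neighborFinset, Finset.mem_insert, Finset.mem_singleton]
      exact ⟨hall w, fun h => by rcases h with rfl | rfl; exacts [hab, hac]⟩
    rw [← SimpleGraph.card_neighborFinset_eq_degree, hnf]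
    exact Finset.card_pair hbc
  by_cases q1 : ∃ y, G.Adj x1 y ∧ y ≠ x2 ∧ y ≠ x3
  · obtain ⟨y1, hy1, hy12, hy13⟩ := q1
    have nq2 : ∀ y, G.Adj x2 y → y = x1 ∨ y = x3 := by
      intro y hy
      by_contra hcon
      push_neg at hcon
      exact core hconn hB hDia hK4 hK23 hP2P3 hP7 hF1 hF4 hdom h12 h23 h13
        hy1 hy12 hy13 hy hcon.1 hcon.2
    have nq3 : ∀ y, G.Adj x3 y → y = x1 ∨ y = x2 := by
      intro y hy
      by_contra hcon
      push_neg at hcon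
      exact core hconn hB hDia hK4 hK23 hP2P3 hP7 hF1 hF4 hdom h13 h23.symm h12
        hy1 hy13 hy12 hy hcon.1 hcon.2
    exact ⟨x2, by simp, x3, by simp, h23.ne,
      deg2 x2 x1 x3 h12.symm h23 h13.ne nq2,
      deg2 x3 x1 x2 h13.symm h23.symm h12.ne nq3⟩
  · by_cases q2 : ∃ y, G.Adj x2 y ∧ y ≠ x1 ∧ y ≠ x3
    · obtain ⟨y2, hy2, hy21, hy23⟩ := q2
      have nq1 : ∀ y, G.Adj x1 y → y = x2 ∨ y = x3 := by
        intro y hy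
        by_contra hcon
        push_neg at hcon
        exact absurd ⟨y, hy, hcon.1, hcon.2⟩ q1
      have nq3 : ∀ y, G.Adj x3 y → y = x1 ∨ y = x2 := by
        intro y hy
        by_contra hcon
        push_neg at hcon
        exact core hconn hB hDia hK4 hK23 hP2P3 hP7 hF1 hF4 hdom h23 h13.symm h12.symm
          hy2 hy23 hy21 hy (fun e => hcon.2 e) (fun e => hcon.1 e)
      exact ⟨x1, by simp, x3, by simp, h13.ne,
        deg2 x1 x2 x3 h12 h13 h23.ne nq1,
        deg2 x3 x1 x2 h13.symm h23.symm h12.ne nq3⟩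
    · have nq1 : ∀ y, G.Adj x1 y → y = x2 ∨ y = x3 := by
        intro y hy
        by_contra hcon
        push_neg at hcon
        exact absurd ⟨y, hy, hcon.1, hcon.2⟩ q1
      have nq2 : ∀ y, G.Adj x2 y → y = x1 ∨ y = x3 := by
        intro y hy
        by_contra hcon
        push_neg at hcon
        exact absurd ⟨y, hy, hcon.1, hcon.2⟩ q2
      exact ⟨x1, by simp, x2, by simp, h12.ne,
        deg2 x1 x2 x3 h12 h13 h23.ne nq1,
        deg2 x2 x1 x3 h12.symm h23 h13.ne nq2⟩
end
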